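/- arXiv:1411.0426 — 2 statements merged into one kernel-verified Lean document; each statement's English description precedes it below -/
import Mathlib

section
/- Let u be a concave, law-determined monetary utility function on L^∞ of an atomless probability space, with the Fatou property and the CxLS property, not equal to the essential infimum, and let K be defined as below. For k ∈ (K,0) and a > 0, the set C(k,a) := {α ∈ [0,1] : u(α δ_k + (1−α) δ_a) ≥ 0} is a closed interval containing 0; its maximum α(k,a) satisfies 0 < α(k,a) < 1, α(k,a) is nondecreasing in k and in a, and u(α(k,a) δ_k + (1−α(k,a)) δ_a) = 0. -/
open MeasureTheory Filter Set
open scoped ENNReal NNReal Topology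

/-- A (representative of an) element of `L^∞`: a measurable, essentially bounded function. -/
def BddMeas {Ω : Type} [MeasurableSpace Ω] (P : Measure Ω) (ξ : Ω → ℝ) : Prop :=
  Measurable ξ ∧ ∃ C : ℝ, ∀ᵐ ω ∂P, |ξ ω| ≤ C

/-- `ξ` has the two-point law `l·δ_x + (1-l)·δ_y`. -/
def HasDyadicLaw {Ω : Type} [MeasurableSpace Ω] (P : Measure Ω) (ξ : Ω → ℝ)
    (x y l : ℝ) : Prop :=
  P.map ξ = ENNReal.ofReal l • Measure.dirac x + ENNReal.ofReal (1 - l) • Measure.dirac y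

/-- Convex level sets at the level of distributions: if `u ξ = u η`, `l ∈ (0,1)` and `ζ` has
law `l·Law(ξ) + (1-l)·Law(η)`, then `u ζ = u ξ`. -/
def CxLS {Ω : Type} [MeasurableSpace Ω] (P : Measure Ω) (u : (Ω → ℝ) → ℝ) : Prop :=
  ∀ ξ η ζ : Ω → ℝ, BddMeas P ξ → BddMeas P η → BddMeas P ζ → u ξ = u η →
    ∀ l : ℝ, 0 < l → l < 1 →
      P.map ζ = ENNReal.ofReal l • P.map ξ + ENNReal.ofReal (1 - l) • P.map η →
      u ζ = u ξ

/-- The essential infimum of `ξ` with respect to `P`. -/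
noncomputable def essInfR {Ω : Type} [MeasurableSpace Ω] (P : Measure Ω) (ξ : Ω → ℝ) : ℝ :=
  sSup {c : ℝ | ∀ᵐ ω ∂P, c ≤ ξ ω}

/-- `u(α δ_k + (1-α) δ_a) ≥ 0` (at the level of distributions). -/
def DyadicGE {Ω : Type} [MeasurableSpace Ω] (P : Measure Ω) (u : (Ω → ℝ) → ℝ)
    (k a α : ℝ) : Prop :=
  ∃ ξ : Ω → ℝ, BddMeas P ξ ∧ HasDyadicLaw P ξ k a α ∧ 0 ≤ u ξ

/-- The set `{k < 0 : for all a > 0 there is α ∈ (0,1) with u(α δ_k + (1-α) δ_a) ≥ 0}`. -/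
def Sset {Ω : Type} [MeasurableSpace Ω] (P : Measure Ω) (u : (Ω → ℝ) → ℝ) : Set ℝ :=
  {k | k < 0 ∧ ∀ a : ℝ, 0 < a → ∃ α : ℝ, 0 < α ∧ α < 1 ∧ DyadicGE P u k a α}

/-- `K := inf Sset ∈ [-∞, 0)`, as an extended real number. -/
noncomputable def Kdef {Ω : Type} [MeasurableSpace Ω] (P : Measure Ω)
    (u : (Ω → ℝ) → ℝ) : EReal :=
  sInf ((fun k : ℝ => (k : EReal)) '' Sset P u)

/-- `C(k,a) := {α ∈ [0,1] : u(α δ_k + (1-α) δ_a) ≥ 0}`. -/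
def Cset {Ω : Type} [MeasurableSpace Ω] (P : Measure Ω) (u : (Ω → ℝ) → ℝ)
    (k a : ℝ) : Set ℝ :=
  {α | 0 ≤ α ∧ α ≤ 1 ∧ DyadicGE P u k a α}

/-- `α(k,a) := max C(k,a)` (as a supremum). -/
noncomputable def alphaMax {Ω : Type} [MeasurableSpace Ω] (P : Measure Ω)
    (u : (Ω → ℝ) → ℝ) (k a : ℝ) : ℝ :=
  sSup (Cset P u k a)

/-- The function `φ` built from `u` with reference point `k₀`:
`φ(k) = 1 - 1/α(k,1)` for `k < 0`, `φ(0) = 0`, and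
`φ(a) = φ(k₀)·(1 + 1/(α(k₀,a) - 1))` for `a > 0`. -/
noncomputable def phi {Ω : Type} [MeasurableSpace Ω] (P : Measure Ω)
    (u : (Ω → ℝ) → ℝ) (k₀ : ℝ) (x : ℝ) : ℝ :=
  if x < 0 then 1 - 1 / alphaMax P u x 1
  else if x = 0 then 0
  else (1 - 1 / alphaMax P u k₀ 1) * (1 + 1 / (alphaMax P u k₀ x - 1))

section AuxLemmas

variable {Ω : Type} [MeasurableSpace Ω] (P : Measure Ω) [IsProbabilityMeasure P]

lemma aux_bddMeas_of_twoValued {ξ : Ω → ℝ} {k a : ℝ} (hm : Measurable ξ)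
    (h2 : ∀ ω, ξ ω = k ∨ ξ ω = a) : BddMeas P ξ := by
  refine ⟨hm, max |k| |a|, ae_of_all _ fun ω => ?_⟩
  rcases h2 ω with h | h <;> rw [h]
  · exact le_max_left _ _
  · exact le_max_right _ _

lemma aux_twoValued_law {ξ : Ω → ℝ} {k a α : ℝ} (hka : k ≠ a) (hm : Measurable ξ)
    (h2 : ∀ ω, ξ ω = k ∨ ξ ω = a) (hα0 : 0 ≤ α) (hα1 : α ≤ 1)
    (hA : P (ξ ⁻¹' {k}) = ENNReal.ofReal α) : HasDyadicLaw P ξ k a α := by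
  have hAmeas : MeasurableSet (ξ ⁻¹' {k}) := hm (measurableSet_singleton k)
  have hAc : P (ξ ⁻¹' {k})ᶜ = ENNReal.ofReal (1 - α) := by
    rw [measure_compl hAmeas (measure_ne_top P _), hA, measure_univ]
    rw [ENNReal.ofReal_sub 1 hα0, ENNReal.ofReal_one]
  refine Measure.ext fun s hs => ?_
  rw [Measure.map_apply hm hs]
  simp only [Measure.coe_add, Measure.coe_smul, Pi.add_apply, Pi.smul_apply,
    Measure.dirac_apply' _ hs, smul_eq_mul]
  by_cases hk : k ∈ s <;> by_cases ha : a ∈ s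
  · have : ξ ⁻¹' s = univ := by
      ext ω; simp only [mem_preimage, mem_univ, iff_true]
      rcases h2 ω with h | h <;> rw [h] <;> assumption
    rw [this, measure_univ]
    simp [Set.indicator_of_mem hk, Set.indicator_of_mem ha]
    rw [← ENNReal.ofReal_add hα0 (by linarith)]
    norm_num
  · have : ξ ⁻¹' s = ξ ⁻¹' {k} := by
      ext ω; simp only [mem_preimage, mem_singleton_iff]
      constructor
      · intro hω; rcases h2 ω with h | h
        · exact h
        · exact absurd (h ▸ hω) ha
      · intro h; rw [h]; exact hk
    rw [this, hA]
    simp [Set.indicator_of_mem hk, Set.indicator_of_notMem ha]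
  · have : ξ ⁻¹' s = (ξ ⁻¹' {k})ᶜ := by
      ext ω; simp only [mem_preimage, mem_compl_iff, mem_singleton_iff]
      constructor
      · intro hω h; exact hk (h ▸ hω)
      · intro h; rcases h2 ω with h' | h'
        · exact absurd h' h
        · rw [h']; exact ha
    rw [this, hAc]
    simp [Set.indicator_of_notMem hk, Set.indicator_of_mem ha]
  · have : ξ ⁻¹' s = ∅ := by
      ext ω; simp only [mem_preimage, mem_empty_iff_false, iff_false]
      intro hω; rcases h2 ω with h | h
      · exact hk (h ▸ hω)
      · exact ha (h ▸ hω)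
    rw [this]
    simp [Set.indicator_of_notMem hk, Set.indicator_of_notMem ha]

lemma aux_meas_of_law {ξ : Ω → ℝ} {k a α : ℝ} (hka : k ≠ a) (hm : Measurable ξ)
    (hlaw : HasDyadicLaw P ξ k a α) : P (ξ ⁻¹' {k}) = ENNReal.ofReal α := by
  have := congrArg (fun μ : Measure ℝ => μ {k}) hlaw
  simp only [Measure.coe_add, Measure.coe_smul, Pi.add_apply, Pi.smul_apply,
    smul_eq_mul] at this
  rw [Measure.map_apply hm (measurableSet_singleton k)] at this
  rw [this, Measure.dirac_apply' _ (measurableSet_singleton k),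
    Measure.dirac_apply' _ (measurableSet_singleton k)]
  rw [Set.indicator_of_mem (mem_singleton k), Set.indicator_of_notMem (by simpa using hka.symm)]
  simp

lemma aux_ae_of_law {ξ : Ω → ℝ} {k a α : ℝ} (hm : Measurable ξ)
    (hlaw : HasDyadicLaw P ξ k a α) : ∀ᵐ ω ∂P, ξ ω = k ∨ ξ ω = a := by
  have hmeas : MeasurableSet (({k, a} : Set ℝ)ᶜ) := (by measurability : MeasurableSet ({k,a} : Set ℝ)).compl
  have := congrArg (fun μ : Measure ℝ => μ ({k, a} : Set ℝ)ᶜ) hlaw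
  simp only [Measure.coe_add, Measure.coe_smul, Pi.add_apply, Pi.smul_apply, smul_eq_mul] at this
  rw [Measure.map_apply hm hmeas] at this
  rw [Measure.dirac_apply' _ hmeas, Measure.dirac_apply' _ hmeas] at this
  rw [Set.indicator_of_notMem (by simp), Set.indicator_of_notMem (by simp)] at this
  simp only [mul_zero, add_zero] at this
  have hset : ξ ⁻¹' ({k, a} : Set ℝ)ᶜ = {ω | ¬(ξ ω = k ∨ ξ ω = a)} := by
    ext ω; simp [not_or]
  rw [ae_iff]
  rw [hset] at this
  exact this

end AuxLemmas


section Sierpinski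

variable {Ω : Type} [MeasurableSpace Ω] (P : Measure Ω) [IsProbabilityMeasure P]

lemma aux_small_sets
    (hAtomless : ∀ A : Set Ω, MeasurableSet A → 0 < P A →
      ∃ B : Set Ω, B ⊆ A ∧ MeasurableSet B ∧ 0 < P B ∧ P B < P A)
    (A : Set Ω) (hA : MeasurableSet A) (hApos : 0 < P A) (ε : ℝ≥0∞) (hε : 0 < ε) :
    ∃ D : Set Ω, D ⊆ A ∧ MeasurableSet D ∧ 0 < P D ∧ P D ≤ ε := by
  by_contra hcon
  push_neg at hcon
  -- every positive-measure measurable subset of A has measure > ε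
  have hbig : ∀ D : Set Ω, D ⊆ A → MeasurableSet D → 0 < P D → ε < P D := fun D h1 h2 h3 =>
    hcon D h1 h2 h3
  have key : ∀ n : ℕ, ∃ B : Set Ω, B ⊆ A ∧ MeasurableSet B ∧ 0 < P B ∧ P B + n * ε ≤ P A := by
    intro n
    induction n with
    | zero => exact ⟨A, subset_rfl, hA, hApos, by simp⟩
    | succ n ih =>
      obtain ⟨B, hBA, hBm, hBpos, hBle⟩ := ih
      obtain ⟨B', hB'B, hB'm, hB'pos, hB'lt⟩ := hAtomless B hBm hBpos
      have hdiffm : MeasurableSet (B \ B') := hBm.diff hB'm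
      have hdiffpos : 0 < P (B \ B') := by
        rw [measure_diff hB'B hB'm.nullMeasurableSet (measure_ne_top P B')]
        exact tsub_pos_of_lt hB'lt
      have hεlt : ε < P (B \ B') := hbig _ ((diff_subset).trans hBA) hdiffm hdiffpos
      refine ⟨B', hB'B.trans hBA, hB'm, hB'pos, ?_⟩
      have hsplit : P B' + P (B \ B') = P B := by
        rw [← measure_union (disjoint_sdiff_right) hdiffm]
        congr 1
        rw [union_diff_cancel hB'B]
      calc P B' + (n + 1 : ℕ) * ε = P B' + n * ε + ε := by
            push_cast; ring
        _ ≤ P B' + n * ε + P (B \ B') := add_le_add_right hεlt.le _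
        _ = (P B' + P (B \ B')) + n * ε := by ring
        _ = P B + n * ε := by rw [hsplit]
        _ ≤ P A := hBle
  -- choose n with n * ε > P A
  have hfin : P A / ε < ⊤ := ENNReal.div_lt_top (measure_ne_top P A) hε.ne'
  obtain ⟨n, hn⟩ := ENNReal.exists_nat_gt hfin.ne
  obtain ⟨B, _, _, hBpos, hBle⟩ := key n
  have : (n : ℝ≥0∞) * ε ≤ P A := le_trans (le_add_self) hBle
  have h2 : P A < n * ε := by
    rw [ENNReal.div_lt_iff (Or.inl hε.ne') (Or.inr (measure_ne_top P A))] at hn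
    exact hn
  exact absurd this (not_le.mpr h2)

end Sierpinski

section Sier2
variable {Ω : Type} [MeasurableSpace Ω] (P : Measure Ω) [IsProbabilityMeasure P]

lemma aux_sierpinski
    (hAtomless : ∀ A : Set Ω, MeasurableSet A → 0 < P A →
      ∃ B : Set Ω, B ⊆ A ∧ MeasurableSet B ∧ 0 < P B ∧ P B < P A)
    (A : Set Ω) (hA : MeasurableSet A) (t : ℝ≥0∞) (ht : t ≤ P A) :
    ∃ B : Set Ω, B ⊆ A ∧ MeasurableSet B ∧ P B = t := by
  classical
  set good : Set Ω → Prop := fun B => B ⊆ A ∧ MeasurableSet B ∧ P B ≤ t with hgood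
  set δ : Set Ω → ℝ≥0∞ := fun B => ⨆ (B' : Set Ω) (_ : B ⊆ B' ∧ good B'), P B' with hδ
  have hδle : ∀ B, δ B ≤ t := fun B =>
    iSup_le fun B' => iSup_le fun hB' => hB'.2.2.2
  have hδge : ∀ B B', B ⊆ B' → good B' → P B' ≤ δ B := by
    intro B B' hsub hgd
    exact le_iSup₂_of_le B' ⟨hsub, hgd⟩ le_rfl
  have httop : t ≠ ⊤ := (lt_of_le_of_lt ht (lt_of_le_of_lt prob_le_one 
    (by norm_num : (1:ℝ≥0∞) < ⊤))).ne
  have hstep : ∀ (n : ℕ) (B : Set Ω), good B →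
      ∃ B' : Set Ω, good B' ∧ B ⊆ B' ∧ δ B ≤ P B' + ((n : ℝ≥0∞) + 1)⁻¹ := by
    intro n B hB
    set η : ℝ≥0∞ := ((n : ℝ≥0∞) + 1)⁻¹ with hηdef
    by_cases hle : δ B ≤ η
    · exact ⟨B, hB, subset_rfl, le_trans hle le_add_self⟩
    · push_neg at hle
      have hη0 : η ≠ 0 :=
        ENNReal.inv_ne_zero.mpr (ENNReal.add_ne_top.2 ⟨ENNReal.natCast_ne_top n, ENNReal.one_ne_top⟩)
      have hδtop : δ B ≠ ⊤ := (lt_of_le_of_lt (hδle B) (lt_top_iff_ne_top.2 httop)).ne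
      have hδ0 : δ B ≠ 0 := (lt_of_le_of_lt (zero_le : (0:ℝ≥0∞) ≤ η) hle).ne'
      have hsub : δ B - η < δ B := ENNReal.sub_lt_self hδtop hδ0 hη0
      rw [hδ] at hsub
      simp only [lt_iSup_iff] at hsub
      obtain ⟨B', hcond, hlt⟩ := hsub
      refine ⟨B', hcond.2, hcond.1, ?_⟩
      have heq : δ B - η + η = δ B := tsub_add_cancel_of_le hle.le
      calc δ B = δ B - η + η := heq.symm
        _ ≤ P B' + η := add_le_add_left hlt.le η
  choose F hF1 hF2 hF3 using hstep
  have hEmpty : good ∅ := ⟨empty_subset A, MeasurableSet.empty, by simp⟩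
  let g : ℕ → {B : Set Ω // good B} := fun n =>
    Nat.rec ⟨∅, hEmpty⟩ (fun n p => ⟨F n p.1 p.2, hF1 n p.1 p.2⟩) n
  have hgsucc : ∀ n, (g n).1 ⊆ (g (n+1)).1 := fun n => hF2 n (g n).1 (g n).2
  have hgδ : ∀ n, δ (g n).1 ≤ P (g (n+1)).1 + ((n : ℝ≥0∞) + 1)⁻¹ :=
    fun n => hF3 n (g n).1 (g n).2
  have hmono : Monotone (fun n => (g n).1) := monotone_nat_of_le_succ hgsucc
  set Binf : Set Ω := ⋃ n, (g n).1 with hBinfdef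
  have hBinfmeas : MeasurableSet Binf := MeasurableSet.iUnion (fun n => (g n).2.2.1)
  have hBinfA : Binf ⊆ A := iUnion_subset fun n => (g n).2.1
  have hBinfle : P Binf ≤ t := by
    rw [hBinfdef, Directed.measure_iUnion hmono.directed_le]
    exact iSup_le fun n => (g n).2.2.2
  rcases eq_or_lt_of_le hBinfle with heq | hlt
  · exact ⟨Binf, hBinfA, hBinfmeas, heq⟩
  · exfalso
    have hrem : 0 < P (A \ Binf) := by
      rw [measure_diff hBinfA hBinfmeas.nullMeasurableSet (measure_ne_top P Binf)]
      exact tsub_pos_of_lt (lt_of_lt_of_le hlt ht)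
    obtain ⟨D, hDsub, hDmeas, hDpos, hDle⟩ := aux_small_sets P hAtomless (A \ Binf)
      (hA.diff hBinfmeas) hrem (t - P Binf) (tsub_pos_of_lt hlt)
    have hdisj : Disjoint Binf D := ((Set.subset_diff.mp hDsub).2).symm
    have hPB' : P (Binf ∪ D) = P Binf + P D := measure_union hdisj hDmeas
    have hgoodB' : good (Binf ∪ D) := by
      refine ⟨union_subset hBinfA (hDsub.trans diff_subset), hBinfmeas.union hDmeas, ?_⟩
      rw [hPB']
      calc P Binf + P D ≤ P Binf + (t - P Binf) := add_le_add_right hDle _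
        _ = t := add_tsub_cancel_of_le hlt.le
    obtain ⟨n, hn⟩ := ENNReal.exists_inv_nat_lt hDpos.ne'
    have hηn : ((n : ℝ≥0∞) + 1)⁻¹ < P D := by
      refine lt_of_le_of_lt ?_ hn
      exact ENNReal.inv_le_inv.mpr (by simp)
    have hchain : P Binf + P D ≤ P Binf + ((n : ℝ≥0∞) + 1)⁻¹ := by
      calc P Binf + P D = P (Binf ∪ D) := hPB'.symm
        _ ≤ δ (g n).1 := hδge (g n).1 (Binf ∪ D)
            ((subset_iUnion (fun m => (g m).1) n).trans subset_union_left) hgoodB'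
        _ ≤ P (g (n+1)).1 + ((n : ℝ≥0∞) + 1)⁻¹ := hgδ n
        _ ≤ P Binf + ((n : ℝ≥0∞) + 1)⁻¹ :=
            add_le_add_left (measure_mono (subset_iUnion (fun m => (g m).1) (n+1))) _
    rw [ENNReal.add_le_add_iff_left (measure_ne_top P Binf)] at hchain
    exact absurd hchain (not_le.mpr hηn)

end Sier2


section Chunk3
variable {Ω : Type} [MeasurableSpace Ω] (P : Measure Ω) [IsProbabilityMeasure P]

lemma aux_threeRegion_law (E₁ E₂ : Set Ω) (h1 : MeasurableSet E₁) (h2 : MeasurableSet E₂)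
    (v₁ v₂ v₃ : ℝ) (ζ : Ω → ℝ) (hmeas : Measurable ζ)
    (hval1 : ∀ ω ∈ E₁, ζ ω = v₁) (hval2 : ∀ ω ∈ E₂ \ E₁, ζ ω = v₂)
    (hval3 : ∀ ω ∈ (E₁ ∪ E₂)ᶜ, ζ ω = v₃) :
    P.map ζ =
      P E₁ • Measure.dirac v₁ + P (E₂ \ E₁) • Measure.dirac v₂ +
        P ((E₁ ∪ E₂)ᶜ) • Measure.dirac v₃ := by
  classical
  refine Measure.ext fun s hs => ?_
  rw [Measure.map_apply hmeas hs]
  have hpre : ζ ⁻¹' s = (if v₁ ∈ s then E₁ else ∅) ∪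
      ((if v₂ ∈ s then E₂ \ E₁ else ∅) ∪ (if v₃ ∈ s then (E₁ ∪ E₂)ᶜ else ∅)) := by
    ext ω
    by_cases hω1 : ω ∈ E₁
    · have hζω : ζ ω = v₁ := hval1 ω hω1
      by_cases hv1 : v₁ ∈ s <;>
        simp [hζω, hv1, hω1, mem_union, mem_diff, mem_compl_iff]
    · by_cases hω2 : ω ∈ E₂
      · have hζω : ζ ω = v₂ := hval2 ω ⟨hω2, hω1⟩
        by_cases hv2 : v₂ ∈ s <;>
          simp [hζω, hv2, hω1, hω2, mem_union, mem_diff, mem_compl_iff]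
      · have hζω : ζ ω = v₃ := hval3 ω (by simp [hω1, hω2])
        by_cases hv3 : v₃ ∈ s <;>
          simp [hζω, hv3, hω1, hω2, mem_union, mem_diff, mem_compl_iff]
  have hm2 : MeasurableSet (if v₂ ∈ s then E₂ \ E₁ else ∅) := by
    split_ifs
    · exact h2.diff h1
    · exact MeasurableSet.empty
  have hm3 : MeasurableSet (if v₃ ∈ s then (E₁ ∪ E₂)ᶜ else ∅) := by
    split_ifs
    · exact (h1.union h2).compl
    · exact MeasurableSet.empty
  have hsub1 : (if v₁ ∈ s then E₁ else ∅) ⊆ E₁ := by split_ifs <;> simp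
  have hsub2 : (if v₂ ∈ s then E₂ \ E₁ else ∅) ⊆ E₂ \ E₁ := by split_ifs <;> simp
  have hsub3 : (if v₃ ∈ s then (E₁ ∪ E₂)ᶜ else ∅) ⊆ (E₁ ∪ E₂)ᶜ := by split_ifs <;> simp
  have hd12 : Disjoint E₁ (E₂ \ E₁) := disjoint_sdiff_right
  have hd13 : Disjoint E₁ (E₁ ∪ E₂)ᶜ :=
    Disjoint.mono_right (compl_subset_compl.mpr subset_union_left) disjoint_compl_right
  have hd23 : Disjoint (E₂ \ E₁) (E₁ ∪ E₂)ᶜ :=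
    Disjoint.mono diff_subset (compl_subset_compl.mpr subset_union_right)
      disjoint_compl_right
  have hmeasure : P (ζ ⁻¹' s) = P (if v₁ ∈ s then E₁ else ∅) +
      (P (if v₂ ∈ s then E₂ \ E₁ else ∅) + P (if v₃ ∈ s then (E₁ ∪ E₂)ᶜ else ∅)) := by
    rw [hpre, measure_union (Disjoint.mono hsub1 (Set.union_subset_union hsub2 hsub3)
      (Disjoint.union_right hd12 hd13)) (hm2.union hm3),
      measure_union (Disjoint.mono hsub2 hsub3 hd23) hm3]
  rw [hmeasure]
  simp only [Measure.coe_add, Measure.coe_smul, Pi.add_apply, Pi.smul_apply,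
    Measure.dirac_apply' _ hs, smul_eq_mul, Set.indicator_apply, Pi.one_apply]
  by_cases hv1 : v₁ ∈ s <;> by_cases hv2 : v₂ ∈ s <;> by_cases hv3 : v₃ ∈ s <;>
    simp [hv1, hv2, hv3, add_assoc]

lemma aux_chain
    (hAtomless : ∀ A : Set Ω, MeasurableSet A → 0 < P A →
      ∃ B : Set Ω, B ⊆ A ∧ MeasurableSet B ∧ 0 < P B ∧ P B < P A)
    (f : ℕ → ℝ) (hmono : Monotone f) (h0 : ∀ n, 0 ≤ f n) (h1 : ∀ n, f n ≤ 1) :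
    ∃ Bs : ℕ → Set Ω, (∀ j, MeasurableSet (Bs j)) ∧
      (∀ j, P (Bs j) = ENNReal.ofReal (f j)) ∧ (∀ j, Bs j ⊆ Bs (j+1)) := by
  classical
  have hstep2 : ∀ (n : ℕ) (B : Set Ω), MeasurableSet B → P B = ENNReal.ofReal (f n) →
      ∃ B' : Set Ω, B ⊆ B' ∧ MeasurableSet B' ∧ P B' = ENNReal.ofReal (f (n+1)) := by
    intro n B hBm hBP
    have hside : ENNReal.ofReal (f (n+1)) - ENNReal.ofReal (f n) ≤ P Bᶜ := by
      rw [prob_compl_eq_one_sub hBm, hBP]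
      exact tsub_le_tsub_right (ENNReal.ofReal_le_one.mpr (h1 (n+1))) _
    obtain ⟨D, hDsub, hDm, hDP⟩ := aux_sierpinski P hAtomless Bᶜ hBm.compl
      (ENNReal.ofReal (f (n+1)) - ENNReal.ofReal (f n)) hside
    refine ⟨B ∪ D, subset_union_left, hBm.union hDm, ?_⟩
    rw [measure_union (Set.subset_compl_iff_disjoint_left.mp hDsub) hDm, hBP, hDP]
    exact add_tsub_cancel_of_le (ENNReal.ofReal_le_ofReal (hmono (Nat.le_succ n)))
  obtain ⟨B0, hB0sub, hB0m, hB0P⟩ := aux_sierpinski P hAtomless univ MeasurableSet.univ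
    (ENNReal.ofReal (f 0)) (by rw [measure_univ]; exact ENNReal.ofReal_le_one.mpr (h1 0))
  choose F2 hF2s hF2m hF2P using hstep2
  let Bs : ∀ n : ℕ, {B : Set Ω // MeasurableSet B ∧ P B = ENNReal.ofReal (f n)} := fun n =>
    Nat.rec ⟨B0, hB0m, hB0P⟩
      (fun n p => ⟨F2 n p.1 p.2.1 p.2.2, hF2m n p.1 p.2.1 p.2.2, hF2P n p.1 p.2.1 p.2.2⟩) n
  exact ⟨fun n => (Bs n).1, fun n => (Bs n).2.1, fun n => (Bs n).2.2,
    fun n => hF2s n (Bs n).1 (Bs n).2.1 (Bs n).2.2⟩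

end Chunk3


set_option maxHeartbeats 2000000 in
theorem stmt_10 {Ω : Type} [MeasurableSpace Ω] (P : Measure Ω) [IsProbabilityMeasure P]
    (u : (Ω → ℝ) → ℝ)
    (hAtomless : ∀ A : Set Ω, MeasurableSet A → 0 < P A →
      ∃ B : Set Ω, B ⊆ A ∧ MeasurableSet B ∧ 0 < P B ∧ P B < P A)
    (hTI : ∀ ξ : Ω → ℝ, BddMeas P ξ → ∀ h : ℝ, u (fun ω => ξ ω + h) = u ξ + h)
    (hMono : ∀ ξ η : Ω → ℝ, BddMeas P ξ → BddMeas P η → (∀ᵐ ω ∂P, ξ ω ≤ η ω) → u ξ ≤ u η)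
    (hNorm : u (fun _ => 0) = 0)
    (hLaw : ∀ ξ η : Ω → ℝ, BddMeas P ξ → BddMeas P η → P.map ξ = P.map η → u ξ = u η)
    (hConc : ∀ ξ η : Ω → ℝ, BddMeas P ξ → BddMeas P η → ∀ l : ℝ, 0 ≤ l → l ≤ 1 →
      l * u ξ + (1 - l) * u η ≤ u (fun ω => l * ξ ω + (1 - l) * η ω))
    (hFatou : ∀ (ξs : ℕ → Ω → ℝ) (ξ : Ω → ℝ), (∀ n, BddMeas P (ξs n)) → BddMeas P ξ →
      (∃ C : ℝ, ∀ n, ∀ᵐ ω ∂P, |ξs n ω| ≤ C) →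
      TendstoInMeasure P ξs Filter.atTop ξ →
      Filter.limsup (fun n => u (ξs n)) Filter.atTop ≤ u ξ)
    (hCxLS : CxLS P u)
    (hNotEssInf : ∃ ξ : Ω → ℝ, BddMeas P ξ ∧ u ξ ≠ essInfR P ξ)
    (k a : ℝ) (hkK : Kdef P u < (k : EReal)) (hk : k < 0) (ha : 0 < a) :
    IsClosed (Cset P u k a) ∧ (Cset P u k a).OrdConnected ∧ (0 : ℝ) ∈ Cset P u k a ∧
      IsGreatest (Cset P u k a) (alphaMax P u k a) ∧
      0 < alphaMax P u k a ∧ alphaMax P u k a < 1 ∧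
      (∀ ξ : Ω → ℝ, BddMeas P ξ → HasDyadicLaw P ξ k a (alphaMax P u k a) → u ξ = 0) ∧
      (∀ k' a' : ℝ, Kdef P u < (k' : EReal) → k' < 0 → 0 < a' → k ≤ k' → a ≤ a' →
        alphaMax P u k a ≤ alphaMax P u k' a') := by
  classical
  have hka : k ≠ a := ne_of_lt (lt_trans hk ha)
  have hkle : k ≤ a := (lt_trans hk ha).le
  have hBddConst : ∀ c : ℝ, BddMeas P (fun _ : Ω => c) :=
    fun c => ⟨measurable_const, |c|, ae_of_all _ fun _ => le_refl _⟩
  have hconst : ∀ c : ℝ, u (fun _ : Ω => c) = c := by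
    intro c
    have h := hTI (fun _ => (0:ℝ)) (hBddConst 0) c
    simp only [zero_add, hNorm] at h
    simpa using h
  -- normalization of witnesses
  have hnormalize : ∀ (k₁ a₁ α : ℝ), k₁ ≠ a₁ → DyadicGE P u k₁ a₁ α →
      ∃ ξ : Ω → ℝ, Measurable ξ ∧ (∀ ω, ξ ω = k₁ ∨ ξ ω = a₁) ∧
        P (ξ ⁻¹' {k₁}) = ENNReal.ofReal α ∧ HasDyadicLaw P ξ k₁ a₁ α ∧ 0 ≤ u ξ := by
    intro k₁ a₁ α hne ⟨ξ₀, hB0, hl0, hu0⟩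
    set ξ : Ω → ℝ := fun ω => if ξ₀ ω = k₁ then k₁ else a₁ with hξdef
    have hmeas : Measurable ξ := by
      refine Measurable.ite ?_ measurable_const measurable_const
      exact hB0.1 (measurableSet_singleton k₁)
    have h2 : ∀ ω, ξ ω = k₁ ∨ ξ ω = a₁ := by
      intro ω
      by_cases h : ξ₀ ω = k₁
      · left; simp [hξdef, h]
      · right; simp [hξdef, h]
    have hae : ξ =ᵐ[P] ξ₀ := by
      filter_upwards [aux_ae_of_law P hB0.1 hl0] with ω hω
      rcases hω with h | h
      · show (if ξ₀ ω = k₁ then k₁ else a₁) = ξ₀ ω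
        rw [if_pos h, h]
      · rcases eq_or_ne (ξ₀ ω) k₁ with h' | h'
        · show (if ξ₀ ω = k₁ then k₁ else a₁) = ξ₀ ω
          rw [if_pos h', h']
        · show (if ξ₀ ω = k₁ then k₁ else a₁) = ξ₀ ω
          rw [if_neg h', h]
    have hmapeq : P.map ξ = P.map ξ₀ := Measure.map_congr hae
    have hlaw : HasDyadicLaw P ξ k₁ a₁ α := by
      rw [HasDyadicLaw, hmapeq]; exact hl0
    have hBdd : BddMeas P ξ := aux_bddMeas_of_twoValued P hmeas h2
    have hueq : u ξ = u ξ₀ := hLaw ξ ξ₀ hBdd hB0 hmapeq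
    exact ⟨ξ, hmeas, h2, aux_meas_of_law P hne hmeas hlaw, hlaw, hueq ▸ hu0⟩
  -- monotone transport between pairs
  have hTransport : ∀ (k₁ a₁ k₂ a₂ α : ℝ), k₁ ≠ a₁ → k₂ ≠ a₂ → k₁ ≤ k₂ → a₁ ≤ a₂ →
      0 ≤ α → α ≤ 1 → DyadicGE P u k₁ a₁ α → DyadicGE P u k₂ a₂ α := by
    intro k₁ a₁ k₂ a₂ α hne1 hne2 hk12 ha12 hα0 hα1 hge
    obtain ⟨ξ, hmeas, h2, hmeasure, hlaw, hu⟩ := hnormalize k₁ a₁ α hne1 hge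
    set η : Ω → ℝ := fun ω => if ξ ω = k₁ then k₂ else a₂ with hηdef
    have hmeasη : Measurable η := by
      refine Measurable.ite ?_ measurable_const measurable_const
      exact hmeas (measurableSet_singleton k₁)
    have h2η : ∀ ω, η ω = k₂ ∨ η ω = a₂ := by
      intro ω; by_cases h : ξ ω = k₁
      · left; simp [hηdef, h]
      · right; simp [hηdef, h]
    have hpre : η ⁻¹' {k₂} = ξ ⁻¹' {k₁} := by
      ext ω
      by_cases h : ξ ω = k₁ <;> simp [hηdef, h, hne2.symm]
    have hlawη : HasDyadicLaw P η k₂ a₂ α := by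
      refine aux_twoValued_law P hne2 hmeasη h2η hα0 hα1 ?_
      rw [hpre]; exact hmeasure
    have hle : ∀ᵐ ω ∂P, ξ ω ≤ η ω := by
      refine ae_of_all _ fun ω => ?_
      by_cases h : ξ ω = k₁
      · have hη : η ω = k₂ := by simp [hηdef, h]
        rw [hη, h]; exact hk12
      · rcases h2 ω with h' | h'
        · exact absurd h' h
        · have hη : η ω = a₂ := by simp [hηdef, h]
          rw [hη, h']; exact ha12
    have hBddξ : BddMeas P ξ := aux_bddMeas_of_twoValued P hmeas h2
    have hBddη : BddMeas P η := aux_bddMeas_of_twoValued P hmeasη h2η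
    exact ⟨η, hBddη, hlawη, le_trans hu (hMono ξ η hBddξ hBddη hle)⟩
  -- 0 ∈ C
  have hzero : (0:ℝ) ∈ Cset P u k a := by
    refine ⟨le_refl 0, zero_le_one, (fun _ => a), hBddConst a, ?_, ?_⟩
    · refine aux_twoValued_law P hka measurable_const (fun ω => Or.inr rfl) le_rfl zero_le_one ?_
      have : ((fun _ : Ω => a) ⁻¹' {k}) = (∅ : Set Ω) := by
        ext ω; simp [hka.symm]
      rw [this]; simp
    · rw [hconst a]; exact ha.le
  have hCbdd : BddAbove (Cset P u k a) := ⟨1, fun α hα => hα.2.1⟩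
  have hCne : (Cset P u k a).Nonempty := ⟨0, hzero⟩
  -- downward closedness
  have hdown : ∀ β ∈ Cset P u k a, ∀ α : ℝ, 0 ≤ α → α ≤ β → α ∈ Cset P u k a := by
    intro β hβ α hα0 hαβ
    obtain ⟨hβ0, hβ1, hβge⟩ := hβ
    obtain ⟨ξ, hmeas, h2, hmeasure, hlaw, hu⟩ := hnormalize k a β hka hβge
    have hAmeas : MeasurableSet (ξ ⁻¹' {k}) := hmeas (measurableSet_singleton k)
    obtain ⟨B, hBsub, hBmeas, hBP⟩ := aux_sierpinski P hAtomless (ξ ⁻¹' {k}) hAmeas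
      (ENNReal.ofReal α) (by rw [hmeasure]; exact ENNReal.ofReal_le_ofReal hαβ)
    set η : Ω → ℝ := fun ω => if ω ∈ B then k else a with hηdef
    have hmeasη : Measurable η := Measurable.ite hBmeas measurable_const measurable_const
    have h2η : ∀ ω, η ω = k ∨ η ω = a := by
      intro ω; by_cases h : ω ∈ B
      · left; simp [hηdef, h]
      · right; simp [hηdef, h]
    have hpre : η ⁻¹' {k} = B := by
      ext ω; by_cases h : ω ∈ B <;> simp [hηdef, h, hka.symm]
    have hlawη : HasDyadicLaw P η k a α := by
      refine aux_twoValued_law P hka hmeasη h2η hα0 (le_trans hαβ hβ1) ?_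
      rw [hpre]; exact hBP
    have hle : ∀ᵐ ω ∂P, ξ ω ≤ η ω := by
      refine ae_of_all _ fun ω => ?_
      by_cases h : ω ∈ B
      · have h1 : ξ ω = k := hBsub h
        have h2' : η ω = k := by simp [hηdef, h]
        rw [h1, h2']
      · have h2' : η ω = a := by simp [hηdef, h]
        rw [h2']
        rcases h2 ω with h' | h'
        · exact le_of_eq_of_le h' hkle
        · exact le_of_eq h'
    have hBddξ : BddMeas P ξ := aux_bddMeas_of_twoValued P hmeas h2
    have hBddη : BddMeas P η := aux_bddMeas_of_twoValued P hmeasη h2η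
    exact ⟨hα0, le_trans hαβ hβ1, η, hBddη, hlawη,
      le_trans hu (hMono ξ η hBddξ hBddη hle)⟩
  have hordconn : (Cset P u k a).OrdConnected := by
    refine ⟨fun x hx y hy z hz => ?_⟩
    exact hdown y hy z (le_trans hx.1 hz.1) hz.2
  have hmub : ∀ α ∈ Cset P u k a, α ≤ alphaMax P u k a := fun α hα => le_csSup hCbdd hα
  have hm0 : 0 ≤ alphaMax P u k a := hmub 0 hzero
  have hm1 : alphaMax P u k a ≤ 1 := csSup_le hCne fun α hα => hα.2.1
  -- the supremum belongs to C (Fatou argument)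
  have hmmem : alphaMax P u k a ∈ Cset P u k a := by
    obtain ⟨αs, hαmono, hαtend, hαmem⟩ := exists_seq_tendsto_sSup hCne hCbdd
    have hαs0 : ∀ n, 0 ≤ αs n := fun n => (hαmem n).1
    have hαs1 : ∀ n, αs n ≤ 1 := fun n => (hαmem n).2.1
    have hstep2 : ∀ (n : ℕ) (B : Set Ω), MeasurableSet B → P B = ENNReal.ofReal (αs n) →
        ∃ B' : Set Ω, B ⊆ B' ∧ MeasurableSet B' ∧ P B' = ENNReal.ofReal (αs (n+1)) := by
      intro n B hBm hBP
      have hside : ENNReal.ofReal (αs (n+1)) - ENNReal.ofReal (αs n) ≤ P Bᶜ := by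
        rw [prob_compl_eq_one_sub hBm, hBP]
        exact tsub_le_tsub_right (ENNReal.ofReal_le_one.mpr (hαs1 (n+1))) _
      obtain ⟨D, hDsub, hDm, hDP⟩ := aux_sierpinski P hAtomless Bᶜ hBm.compl
        (ENNReal.ofReal (αs (n+1)) - ENNReal.ofReal (αs n)) hside
      refine ⟨B ∪ D, subset_union_left, hBm.union hDm, ?_⟩
      rw [measure_union (Set.subset_compl_iff_disjoint_left.mp hDsub) hDm, hBP, hDP]
      exact add_tsub_cancel_of_le (ENNReal.ofReal_le_ofReal (hαmono (Nat.le_succ n)))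
    obtain ⟨B0, hB0sub, hB0m, hB0P⟩ := aux_sierpinski P hAtomless univ MeasurableSet.univ
      (ENNReal.ofReal (αs 0)) (by rw [measure_univ]; exact ENNReal.ofReal_le_one.mpr (hαs1 0))
    choose F2 hF2s hF2m hF2P using hstep2
    let Bs : ∀ n : ℕ, {B : Set Ω // MeasurableSet B ∧ P B = ENNReal.ofReal (αs n)} := fun n =>
      Nat.rec ⟨B0, hB0m, hB0P⟩
        (fun n p => ⟨F2 n p.1 p.2.1 p.2.2, hF2m n p.1 p.2.1 p.2.2, hF2P n p.1 p.2.1 p.2.2⟩) n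
    have hBsucc : ∀ n, (Bs n).1 ⊆ (Bs (n+1)).1 := fun n => hF2s n (Bs n).1 (Bs n).2.1 (Bs n).2.2
    have hBmono : Monotone fun n => (Bs n).1 := monotone_nat_of_le_succ hBsucc
    set U : Set Ω := ⋃ n, (Bs n).1 with hUdef
    have hUm : MeasurableSet U := MeasurableSet.iUnion fun n => (Bs n).2.1
    have hPlim : Tendsto (fun n => P (Bs n).1) atTop (𝓝 (P U)) :=
      tendsto_measure_iUnion_atTop hBmono
    have hPlim2 : Tendsto (fun n => P (Bs n).1) atTop
        (𝓝 (ENNReal.ofReal (alphaMax P u k a))) := by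
      have h1 : Tendsto (fun n => ENNReal.ofReal (αs n)) atTop
          (𝓝 (ENNReal.ofReal (alphaMax P u k a))) :=
        (ENNReal.continuous_ofReal.tendsto _).comp hαtend
      refine h1.congr fun n => ?_
      exact ((Bs n).2.2).symm
    have hPU : P U = ENNReal.ofReal (alphaMax P u k a) := tendsto_nhds_unique hPlim hPlim2
    set ξn : ℕ → Ω → ℝ := fun n ω => if ω ∈ (Bs n).1 then k else a with hξndef
    set ξ : Ω → ℝ := fun ω => if ω ∈ U then k else a with hξdef
    have hξnm : ∀ n, Measurable (ξn n) := fun n =>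
      Measurable.ite (Bs n).2.1 measurable_const measurable_const
    have hξn2 : ∀ n ω, ξn n ω = k ∨ ξn n ω = a := by
      intro n ω; by_cases h : ω ∈ (Bs n).1
      · left; simp [hξndef, h]
      · right; simp [hξndef, h]
    have hξm : Measurable ξ := Measurable.ite hUm measurable_const measurable_const
    have hξ2 : ∀ ω, ξ ω = k ∨ ξ ω = a := by
      intro ω; by_cases h : ω ∈ U
      · left; simp [hξdef, h]
      · right; simp [hξdef, h]
    have hξnlaw : ∀ n, HasDyadicLaw P (ξn n) k a (αs n) := by
      intro n
      refine aux_twoValued_law P hka (hξnm n) (hξn2 n) (hαs0 n) (hαs1 n) ?_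
      have hpre : (ξn n) ⁻¹' {k} = (Bs n).1 := by
        ext ω; by_cases h : ω ∈ (Bs n).1 <;> simp [hξndef, h, hka.symm]
      rw [hpre]; exact (Bs n).2.2
    have hξlaw : HasDyadicLaw P ξ k a (alphaMax P u k a) := by
      refine aux_twoValued_law P hka hξm hξ2 hm0 hm1 ?_
      have hpre : ξ ⁻¹' {k} = U := by
        ext ω; by_cases h : ω ∈ U <;> simp [hξdef, h, hka.symm]
      rw [hpre]; exact hPU
    have hξnB : ∀ n, BddMeas P (ξn n) := fun n => aux_bddMeas_of_twoValued P (hξnm n) (hξn2 n)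
    have hξB : BddMeas P ξ := aux_bddMeas_of_twoValued P hξm hξ2
    have hξnu : ∀ n, 0 ≤ u (ξn n) := by
      intro n
      obtain ⟨-, -, ζ, hζB, hζlaw, hζu⟩ := hαmem n
      have heq : u (ξn n) = u ζ := hLaw _ _ (hξnB n) hζB ((hξnlaw n).trans hζlaw.symm)
      rw [heq]; exact hζu
    have htim : TendstoInMeasure P ξn atTop ξ := by
      intro ε hε
      have hsub : ∀ n, {ω | ε ≤ edist (ξn n ω) (ξ ω)} ⊆ U \ (Bs n).1 := by
        intro n ω hω
        simp only [mem_setOf_eq] at hω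
        by_cases h1 : ω ∈ (Bs n).1
        · have h2 : ω ∈ U := subset_iUnion (fun m => (Bs m).1) n h1
          have hd : edist (ξn n ω) (ξ ω) = 0 := by
            simp [hξndef, hξdef, h1, h2]
          rw [hd] at hω; exact absurd (lt_of_lt_of_le hε hω) (lt_irrefl 0)
        · by_cases h2 : ω ∈ U
          · exact ⟨h2, h1⟩
          · have hd : edist (ξn n ω) (ξ ω) = 0 := by
              simp [hξndef, hξdef, h1, h2]
            rw [hd] at hω; exact absurd (lt_of_lt_of_le hε hω) (lt_irrefl 0)
      have hdiff : ∀ n, P (U \ (Bs n).1) = P U - P (Bs n).1 := fun n =>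
        measure_diff (subset_iUnion (fun m => (Bs m).1) n) (Bs n).2.1.nullMeasurableSet
          (measure_ne_top P _)
      have htend0 : Tendsto (fun n => P U - P (Bs n).1) atTop (𝓝 0) := by
        have h := ENNReal.Tendsto.sub (tendsto_const_nhds (x := P U)) hPlim
          (Or.inl (measure_ne_top P U))
        simpa using h
      refine tendsto_of_tendsto_of_tendsto_of_le_of_le tendsto_const_nhds htend0
        (fun n => zero_le) (fun n => ?_)
      calc P {ω | ε ≤ edist (ξn n ω) (ξ ω)} ≤ P (U \ (Bs n).1) := measure_mono (hsub n)
        _ = P U - P (Bs n).1 := hdiff n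
    have hbound : ∃ C : ℝ, ∀ n, ∀ᵐ ω ∂P, |ξn n ω| ≤ C := by
      refine ⟨max |k| |a|, fun n => ae_of_all _ fun ω => ?_⟩
      rcases hξn2 n ω with h | h <;> rw [h]
      · exact le_max_left _ _
      · exact le_max_right _ _
    have hlimsup := hFatou ξn ξ hξnB hξB hbound htim
    have hub : ∀ n, u (ξn n) ≤ a := by
      intro n
      have hle : ∀ᵐ ω ∂P, ξn n ω ≤ (fun _ => a) ω := ae_of_all _ fun ω => by
        rcases hξn2 n ω with h | h
        · exact le_of_eq_of_le h hkle
        · exact le_of_eq h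
      have h := hMono _ _ (hξnB n) (hBddConst a) hle
      rwa [hconst a] at h
    have hbddu : IsBoundedUnder (· ≤ ·) atTop fun n => u (ξn n) :=
      Filter.isBoundedUnder_of ⟨a, hub⟩
    have h0le : (0:ℝ) ≤ limsup (fun n => u (ξn n)) atTop :=
      le_limsup_of_frequently_le (Frequently.of_forall hξnu) hbddu
    exact ⟨hm0, hm1, ξ, hξB, hξlaw, le_trans h0le hlimsup⟩
  have hgreatest : IsGreatest (Cset P u k a) (alphaMax P u k a) := ⟨hmmem, fun α hα => hmub α hα⟩
  have hCeq : Cset P u k a = Icc 0 (alphaMax P u k a) := by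
    ext α
    constructor
    · intro hα; exact ⟨hα.1, hmub α hα⟩
    · intro hα; exact hdown _ hmmem α hα.1 hα.2
  have hclosed : IsClosed (Cset P u k a) := by rw [hCeq]; exact isClosed_Icc
  -- alphaMax < 1
  have hmlt1 : alphaMax P u k a < 1 := by
    rcases lt_or_eq_of_le hm1 with h | h
    · exact h
    · exfalso
      have h1mem : (1:ℝ) ∈ Cset P u k a := h ▸ hmmem
      obtain ⟨-, -, ξ, hBdd, hlaw, hu⟩ := h1mem
      have hlaw' : P.map ξ = Measure.dirac k := by
        rw [HasDyadicLaw] at hlaw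
        simpa using hlaw
      have hconstmap : P.map (fun _ : Ω => k) = Measure.dirac k := by
        rw [Measure.map_const]; simp
      have : u ξ = k := by
        rw [hLaw ξ (fun _ => k) hBdd (hBddConst k) (hlaw'.trans hconstmap.symm)]
        exact hconst k
      rw [this] at hu
      exact absurd (lt_of_lt_of_le hk hu) (lt_irrefl k)
  -- 0 < alphaMax
  have hmpos : 0 < alphaMax P u k a := by
    obtain ⟨x, hxmem, hxlt⟩ := sInf_lt_iff.mp hkK
    obtain ⟨k', hk'S, rfl⟩ := hxmem
    have hk'k : k' < k := EReal.coe_lt_coe_iff.mp hxlt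
    obtain ⟨hk'0, hall⟩ := hk'S
    obtain ⟨α', hα'0, hα'1, hge⟩ := hall a ha
    have : DyadicGE P u k a α' :=
      hTransport k' a k a α' (ne_of_lt (lt_trans hk'0 ha)) hka hk'k.le le_rfl hα'0.le hα'1.le hge
    exact lt_of_lt_of_le hα'0 (hmub α' ⟨hα'0.le, hα'1.le, this⟩)
  -- value at the maximum is zero
  have hbullet7 : ∀ ξ : Ω → ℝ, BddMeas P ξ → HasDyadicLaw P ξ k a (alphaMax P u k a) →
      u ξ = 0 := by
    obtain ⟨hm0', hm1', hGEm⟩ := hmmem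
    obtain ⟨ξm, hξmmeas, hξm2, hξmpre, hξmlaw, hξmu⟩ :=
      hnormalize k a (alphaMax P u k a) hka hGEm
    have hξmB : BddMeas P ξm := aux_bddMeas_of_twoValued P hξmmeas hξm2
    set m : ℝ := alphaMax P u k a with hmdef
    set c : ℝ := u ξm with hcdef
    have hc0 : 0 ≤ c := hξmu
    have hceq : c = 0 := by
      by_contra hcne
      have hc : 0 < c := lt_of_le_of_ne hc0 (Ne.symm hcne)
      -- choice of n
      set n : ℕ := ⌈(-k) / c⌉₊ + 1 with hndef
      have hceil : (1:ℕ) ≤ ⌈(-k) / c⌉₊ := by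
        refine Nat.one_le_iff_ne_zero.mpr (Nat.ceil_pos.mpr ?_).ne'
        have : 0 < -k := by linarith
        positivity
      have hn2 : 2 ≤ n := by omega
      set N : ℝ := (n : ℝ) with hNdef
      have hN2 : (2:ℝ) ≤ N := by rw [hNdef]; exact_mod_cast hn2
      have hN1 : (1:ℝ) ≤ N - 1 := by linarith
      have hN0 : (0:ℝ) < N := by linarith
      have hnk : -k ≤ (N - 1) * c := by
        have h1 : (-k) / c ≤ (⌈(-k) / c⌉₊ : ℝ) := Nat.le_ceil _
        have h2 : N - 1 = (⌈(-k) / c⌉₊ : ℝ) := by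
          rw [hNdef, hndef]; push_cast; ring
        rw [h2]
        calc -k = ((-k)/c) * c := by field_simp
          _ ≤ (⌈(-k) / c⌉₊ : ℝ) * c := mul_le_mul_of_nonneg_right h1 hc.le
      -- the mixing parameters
      set den : ℝ := (N - 1) + m with hdendef
      have hden : 0 < den := by rw [hdendef]; linarith [hmpos]
      set e : ℝ := m / den with hedef
      set lam : ℝ := (N - 1) / den with hlamdef
      have he0 : 0 ≤ e := by
        rw [hedef]; positivity
      have hlam0 : 0 < lam := by rw [hlamdef]; positivity
      have hlam1 : lam < 1 := by
        rw [hlamdef, div_lt_one hden, hdendef]; linarith [hmpos]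
      have hr3 : e = 1 - lam := by
        rw [hedef, hlamdef, hdendef]; field_simp; ring
      have hr1 : N * e - e = lam * m := by
        rw [hedef, hlamdef]; field_simp
      have hr2 : 1 - N * e = lam * (1 - m) := by
        rw [hedef, hlamdef]; field_simp; ring
      have hT1 : N * e ≤ 1 := by
        rw [hedef, mul_div_assoc', div_le_one hden, hdendef]
        nlinarith [hm1, hN1]
      have hTm : m < N * e := by
        rw [hedef, mul_div_assoc', lt_div_iff₀ hden, hdendef]
        nlinarith [hmlt1, hmpos]
      -- the chain of sets and the ring pieces
      have hfmono : Monotone (fun j : ℕ => ((min j n : ℕ) : ℝ) * e) := by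
        intro i j hij
        exact mul_le_mul_of_nonneg_right (Nat.cast_le.mpr (min_le_min hij (le_refl n))) he0
      have hf0 : ∀ j : ℕ, 0 ≤ ((min j n : ℕ) : ℝ) * e :=
        fun j => mul_nonneg (Nat.cast_nonneg _) he0
      have hf1 : ∀ j : ℕ, ((min j n : ℕ) : ℝ) * e ≤ 1 := by
        intro j
        refine le_trans ?_ hT1
        refine mul_le_mul_of_nonneg_right ?_ he0
        rw [hNdef]
        exact_mod_cast min_le_right j n
      obtain ⟨Ch, hChm, hChP, hChsucc⟩ :=
        aux_chain P hAtomless (fun j : ℕ => ((min j n : ℕ) : ℝ) * e) hfmono hf0 hf1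
      have hChmono : Monotone Ch := monotone_nat_of_le_succ hChsucc
      have hChle : ∀ j, j ≤ n → P (Ch j) = ENNReal.ofReal ((j:ℝ) * e) := by
        intro j hj
        have := hChP j
        rwa [min_eq_left hj] at this
      set U : Set Ω := Ch n with hUdef
      have hUm : MeasurableSet U := hChm n
      have hPU : P U = ENNReal.ofReal (N * e) := hChle n (le_refl n)
      set Epart : ℕ → Set Ω := fun j => Ch (j+1) \ Ch j with hEdef
      have hEm : ∀ j, MeasurableSet (Epart j) := fun j => (hChm (j+1)).diff (hChm j)
      have hEU : ∀ j, j < n → Epart j ⊆ U := by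
        intro j hj
        exact (diff_subset).trans (hChmono hj)
      have hEP : ∀ j, j < n → P (Epart j) = ENNReal.ofReal e := by
        intro j hj
        rw [hEdef]
        rw [measure_diff (hChsucc j) (hChm j).nullMeasurableSet (measure_ne_top P _)]
        rw [hChle (j+1) hj, hChle j (le_of_lt hj)]
        rw [← ENNReal.ofReal_sub _ (mul_nonneg (Nat.cast_nonneg _) he0)]
        congr 1
        push_cast
        ring
      have hEdisj : ∀ p q : ℕ, p < q → ∀ ω, ω ∈ Epart p → ω ∉ Epart q := by
        intro p q hpq ω hωp hωq
        have h1 : ω ∈ Ch q := hChmono hpq hωp.1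
        exact hωq.2 h1
      have hEdisj' : ∀ p q : ℕ, p ≠ q → ∀ ω, ω ∈ Epart p → ω ∉ Epart q := by
        intro p q hpq ω hωp hωq
        rcases lt_or_gt_of_ne hpq with h | h
        · exact hEdisj p q h ω hωp hωq
        · exact hEdisj q p h ω hωq hωp
      -- the translated witness ξc, with u ξc = 0
      set ξc : Ω → ℝ := fun ω => ξm ω + (-c) with hξcdef
      have hξcmeas : Measurable ξc := hξmmeas.add_const (-c)
      have hξc2 : ∀ ω, ξc ω = k - c ∨ ξc ω = a - c := by
        intro ω
        rcases hξm2 ω with h | h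
        · left; rw [hξcdef]; simp only []; rw [h]; ring
        · right; rw [hξcdef]; simp only []; rw [h]; ring
      have hξcB : BddMeas P ξc := aux_bddMeas_of_twoValued P hξcmeas hξc2
      have hξcu : u ξc = 0 := by
        have h := hTI ξm hξmB (-c)
        rw [hξcdef]
        rw [h, ← hcdef]; ring
      have hkca : k - c ≠ a - c := by
        intro h
        exact hka (by linarith [sub_left_injective.eq_iff.mp h])
      have hξcpre : ξc ⁻¹' {k - c} = ξm ⁻¹' {k} := by
        ext ω
        simp only [mem_preimage, mem_singleton_iff, hξcdef]
        constructor
        · intro h; linarith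
        · intro h; rw [h]; ring
      have hξclaw : HasDyadicLaw P ξc (k - c) (a - c) m := by
        refine aux_twoValued_law P hkca hξcmeas hξc2 hm0 hm1 ?_
        rw [hξcpre]
        exact hξmpre
      -- the CxLS mixtures ζ i
      set ζ : ℕ → Ω → ℝ :=
        fun i ω => if ω ∈ Epart i then 0 else if ω ∈ U then k - c else a - c with hζdef
      have hζmeas : ∀ i, Measurable (ζ i) := by
        intro i
        exact Measurable.ite (hEm i) measurable_const
          (Measurable.ite hUm measurable_const measurable_const)
      have hζ3 : ∀ i ω, ζ i ω = 0 ∨ ζ i ω = k - c ∨ ζ i ω = a - c := by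
        intro i ω
        rw [hζdef]
        by_cases h1 : ω ∈ Epart i
        · left; simp [h1]
        · by_cases h2 : ω ∈ U
          · right; left; simp [h1, h2]
          · right; right; simp [h1, h2]
      have hζB : ∀ i, BddMeas P (ζ i) := by
        intro i
        refine ⟨hζmeas i, max |k - c| |a - c|, ae_of_all _ fun ω => ?_⟩
        rcases hζ3 i ω with h | h | h <;> rw [h]
        · simp only [abs_zero]
          exact le_trans (abs_nonneg (k-c)) (le_max_left _ _)
        · exact le_max_left _ _
        · exact le_max_right _ _
      have hζval1 : ∀ i, ∀ ω ∈ Epart i, ζ i ω = 0 := by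
        intro i ω h; rw [hζdef]; simp [h]
      have hζval2 : ∀ i, ∀ ω ∈ U \ Epart i, ζ i ω = k - c := by
        intro i ω h; rw [hζdef]; simp [h.2, h.1]
      have hζval3 : ∀ i, ∀ ω ∈ (Epart i ∪ U)ᶜ, ζ i ω = a - c := by
        intro i ω h
        rw [mem_compl_iff, mem_union] at h
        push_neg at h
        rw [hζdef]; simp [h.1, h.2]
      have hζlaweq : ∀ i, i < n → P.map (ζ i) =
          ENNReal.ofReal lam • P.map ξc + ENNReal.ofReal (1 - lam) • P.map (fun _ : Ω => (0:ℝ)) := by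
        intro i hi
        have hlhs := aux_threeRegion_law P (Epart i) U (hEm i) hUm 0 (k - c) (a - c)
          (ζ i) (hζmeas i) (hζval1 i) (hζval2 i) (hζval3 i)
        have hPE : P (Epart i) = ENNReal.ofReal (1 - lam) := by
          rw [hEP i hi, hr3]
        have hPUE : P (U \ Epart i) = ENNReal.ofReal (lam * m) := by
          rw [measure_diff (hEU i hi) (hEm i).nullMeasurableSet (measure_ne_top P _),
            hPU, hEP i hi, ← ENNReal.ofReal_sub _ he0, ← hr1]
        have hPUc : P ((Epart i ∪ U)ᶜ) = ENNReal.ofReal (lam * (1 - m)) := by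
          rw [union_eq_self_of_subset_left (hEU i hi)]
          rw [measure_compl hUm (measure_ne_top P _), measure_univ, hPU]
          rw [← ENNReal.ofReal_one, ← ENNReal.ofReal_sub _ (by positivity : (0:ℝ) ≤ N * e), hr2]
        have hmap0 : P.map (fun _ : Ω => (0:ℝ)) = Measure.dirac 0 := by
          rw [Measure.map_const, measure_univ, one_smul]
        rw [hlhs, hPE, hPUE, hPUc, hmap0]
        rw [show HasDyadicLaw P ξc (k-c) (a-c) m ↔ P.map ξc =
          ENNReal.ofReal m • Measure.dirac (k-c) + ENNReal.ofReal (1-m) • Measure.dirac (a-c)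
          from Iff.rfl] at hξclaw
        rw [hξclaw, smul_add, smul_smul, smul_smul]
        rw [← ENNReal.ofReal_mul hlam0.le, ← ENNReal.ofReal_mul hlam0.le]
        rw [add_rotate]
      have hζu : ∀ i, i < n → u (ζ i) = 0 := by
        intro i hi
        have h := hCxLS ξc (fun _ => (0:ℝ)) (ζ i) hξcB (hBddConst 0) (hζB i)
          (by rw [hξcu, hNorm]) lam hlam0 hlam1 (hζlaweq i hi)
        rw [h, hξcu]
      -- iterated averages, by induction
      have hAvgkey : ∀ j : ℕ, j + 1 ≤ n → ∃ V : Ω → ℝ, BddMeas P V ∧ 0 ≤ u V ∧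
          (∀ ω, ω ∉ U → V ω = a - c) ∧
          (∀ p, p ≤ j → ∀ ω, ω ∈ Epart p → V ω = ((j:ℝ)/((j:ℝ)+1)) * (k - c)) ∧
          (∀ ω, ω ∈ U → (∀ p, p ≤ j → ω ∉ Epart p) → V ω = k - c) := by
        intro j
        induction j with
        | zero =>
          intro hn'
          refine ⟨ζ 0, hζB 0, le_of_eq (hζu 0 (by omega)).symm, ?_, ?_, ?_⟩
          · intro ω hU
            have hE : ω ∉ Epart 0 := fun h => hU (hEU 0 (by omega) h)
            refine hζval3 0 ω ?_
            rw [mem_compl_iff, mem_union]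
            push_neg
            exact ⟨hE, hU⟩
          · intro p hp ω hE
            interval_cases p
            rw [hζval1 0 ω hE]
            norm_num
          · intro ω hU hnop
            exact hζval2 0 ω ⟨hU, hnop 0 (le_refl 0)⟩
        | succ j ih =>
          intro hn'
          obtain ⟨V, hVB, hVu, hV1, hV2, hV3⟩ := ih (by omega)
          set l : ℝ := ((j:ℝ)+1)/((j:ℝ)+2) with hldef
          have hjne1 : ((j:ℝ)+1) ≠ 0 := by positivity
          have hjne2 : ((j:ℝ)+2) ≠ 0 := by positivity
          have hl0 : 0 ≤ l := by rw [hldef]; positivity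
          have hl1 : l ≤ 1 := by
            rw [hldef, div_le_one (by positivity)]
            linarith
          refine ⟨fun ω => l * V ω + (1 - l) * ζ (j+1) ω, ?_, ?_, ?_, ?_, ?_⟩
          · refine ⟨(hVB.1.const_mul _).add ((hζmeas (j+1)).const_mul _), ?_⟩
            obtain ⟨C, hC⟩ := hVB.2
            obtain ⟨C2, hC2⟩ := (hζB (j+1)).2
            refine ⟨|l| * C + |1 - l| * C2, ?_⟩
            filter_upwards [hC, hC2] with ω h1 h2
            calc |l * V ω + (1-l) * ζ (j+1) ω| ≤ |l * V ω| + |(1-l) * ζ (j+1) ω| :=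
                  abs_add_le _ _
              _ = |l| * |V ω| + |1-l| * |ζ (j+1) ω| := by rw [abs_mul, abs_mul]
              _ ≤ |l| * C + |1-l| * C2 :=
                  add_le_add (mul_le_mul_of_nonneg_left h1 (abs_nonneg _))
                    (mul_le_mul_of_nonneg_left h2 (abs_nonneg _))
          · have hconc := hConc V (ζ (j+1)) hVB (hζB (j+1)) l hl0 hl1
            have hζ0 : u (ζ (j+1)) = 0 := hζu (j+1) (by omega)
            refine le_trans ?_ hconc
            rw [hζ0]
            nlinarith
          · intro ω hU
            have hE : ω ∉ Epart (j+1) := fun h => hU (hEU (j+1) (by omega) h)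
            have hζω : ζ (j+1) ω = a - c := by
              refine hζval3 (j+1) ω ?_
              rw [mem_compl_iff, mem_union]
              push_neg
              exact ⟨hE, hU⟩
            simp only []
            rw [hV1 ω hU, hζω]
            ring
          · intro p hp ω hE
            rcases Nat.lt_or_ge p (j+1) with hpj | hpj
            · have hpj' : p ≤ j := by omega
              have hEj1 : ω ∉ Epart (j+1) := hEdisj' p (j+1) (by omega) ω hE
              have hωU : ω ∈ U := hEU p (by omega) hE
              simp only []
              rw [hV2 p hpj' ω hE, hζval2 (j+1) ω ⟨hωU, hEj1⟩, hldef]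
              push_cast
              field_simp
              ring
            · have hpj' : p = j + 1 := by omega
              subst hpj'
              have hωU : ω ∈ U := hEU (j+1) (by omega) hE
              have hnoprev : ∀ q, q ≤ j → ω ∉ Epart q :=
                fun q hq => hEdisj' (j+1) q (by omega) ω hE
              simp only []
              rw [hV3 ω hωU hnoprev, hζval1 (j+1) ω hE, hldef]
              push_cast
              ring
          · intro ω hU hnop
            have hnoprev : ∀ q, q ≤ j → ω ∉ Epart q := fun q hq => hnop q (by omega)
            have hEj1 : ω ∉ Epart (j+1) := hnop (j+1) (le_refl _)
            simp only []
            rw [hV3 ω hU hnoprev, hζval2 (j+1) ω ⟨hU, hEj1⟩]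
            ring
      have hn1 : (n - 1) + 1 ≤ n := by omega
      obtain ⟨W, hWB, hWu, hW1, hW2, hW3⟩ := hAvgkey (n-1) hn1
      have hNcast : ((n - 1 : ℕ) : ℝ) = N - 1 := by
        rw [hNdef]
        have h1n : (1:ℕ) ≤ n := by omega
        push_cast [Nat.cast_sub h1n]
        ring
      set ξ' : Ω → ℝ := fun ω => if ω ∈ U then k else a with hξ'def
      have hξ'meas : Measurable ξ' := Measurable.ite hUm measurable_const measurable_const
      have hξ'2 : ∀ ω, ξ' ω = k ∨ ξ' ω = a := by
        intro ω; by_cases h : ω ∈ U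
        · left; rw [hξ'def]; simp [h]
        · right; rw [hξ'def]; simp [h]
      have hξ'B : BddMeas P ξ' := aux_bddMeas_of_twoValued P hξ'meas hξ'2
      have hkey : ((N - 1)/N) * (k - c) ≤ k := by
        rw [div_mul_eq_mul_div, div_le_iff₀ hN0]
        nlinarith [hnk]
      have hWle : ∀ ω, W ω ≤ ξ' ω := by
        intro ω
        by_cases hU : ω ∈ U
        · have hξ'ω : ξ' ω = k := by rw [hξ'def]; simp [hU]
          rw [hξ'ω]
          by_cases hp : ∃ p, p ≤ n - 1 ∧ ω ∈ Epart p
          · obtain ⟨p, hp1, hp2⟩ := hp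
            rw [hW2 p hp1 ω hp2, hNcast, show (N - 1) + 1 = N from by ring]
            exact hkey
          · push_neg at hp
            rw [hW3 ω hU fun p hp' => hp p hp']
            linarith
        · have hξ'ω : ξ' ω = a := by rw [hξ'def]; simp [hU]
          rw [hξ'ω, hW1 ω hU]
          linarith
      have hξ'u : 0 ≤ u ξ' :=
        le_trans hWu (hMono W ξ' hWB hξ'B (ae_of_all _ hWle))
      have hξ'law : HasDyadicLaw P ξ' k a (N * e) := by
        refine aux_twoValued_law P hka hξ'meas hξ'2 (by positivity) hT1 ?_
        have hpre : ξ' ⁻¹' {k} = U := by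
          ext ω; by_cases h : ω ∈ U <;> simp [hξ'def, h, hka.symm]
        rw [hpre]; exact hPU
      have hTmem : N * e ∈ Cset P u k a :=
        ⟨by positivity, hT1, ξ', hξ'B, hξ'law, hξ'u⟩
      exact absurd (hmub (N * e) hTmem) (not_le.mpr hTm)
    intro ξ hBξ hlawξ
    rw [hLaw ξ ξm hBξ hξmB (hlawξ.trans hξmlaw.symm), ← hcdef, hceq]
  -- monotonicity
  have hbullet8 : ∀ k' a' : ℝ, Kdef P u < (k' : EReal) → k' < 0 → 0 < a' → k ≤ k' → a ≤ a' →
      alphaMax P u k a ≤ alphaMax P u k' a' := by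
    intro k' a' _ hk'0 ha'0 hkk' haa'
    refine csSup_le_csSup ⟨1, fun α hα => hα.2.1⟩ hCne fun α hα => ?_
    exact ⟨hα.1, hα.2.1,
      hTransport k a k' a' α hka (ne_of_lt (lt_trans hk'0 ha'0)) hkk' haa' hα.1 hα.2.1 hα.2.2⟩
  exact ⟨hclosed, hordconn, hzero, hgreatest, hmpos, hmlt1, hbullet7, hbullet8⟩
end

section
/- Let (Ω,𝓕,ℙ) be an atomless probability space. Then there exist two families of measurable sets (A_t)_{0≤t≤1} and (B_t)_{0≤t≤1}, each increasing in t (A_s ⊆ A_t and B_s ⊆ B_t for s ≤ t), such that ℙ(A_t) = ℙ(B_t) = t for every t ∈ [0,1], and the σ-algebras 𝓐 := σ(A_t : 0 ≤ t ≤ 1) and 𝓑 := σ(B_t : 0 ≤ t ≤ 1) are independent. -/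
open MeasureTheory Filter Set
open scoped ENNReal Topology
section
variable {Ω : Type} [MeasurableSpace Ω] (P : Measure Ω) [IsProbabilityMeasure P]

def AtomlessHyp (P : Measure Ω) : Prop :=
  ∀ A : Set Ω, MeasurableSet A → 0 < P A → ∃ B : Set Ω, B ⊆ A ∧ MeasurableSet B ∧ 0 < P B ∧ P B < P A

theorem my_halflt
    (hAtomless : ∀ A : Set Ω, MeasurableSet A → 0 < P A →
      ∃ B : Set Ω, B ⊆ A ∧ MeasurableSet B ∧ 0 < P B ∧ P B < P A)
    (S : Set Ω) (hS : MeasurableSet S) (h0 : 0 < P S) :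
    ∃ T, T ⊆ S ∧ MeasurableSet T ∧ 0 < P T ∧ P T ≤ P S / 2 := by
  obtain ⟨B, hBS, hBm, hB0, hBlt⟩ := hAtomless S hS h0
  have hfin : P S ≠ ⊤ := (measure_lt_top P S).ne
  have hdiff : P (S \ B) = P S - P B := measure_diff hBS hBm.nullMeasurableSet (hBlt.trans_le le_top).ne
  have hd0 : 0 < P (S \ B) := by
    rw [hdiff]
    exact tsub_pos_of_lt hBlt
  have hsum : P B + P (S \ B) = P S := by
    rw [hdiff]
    exact add_tsub_cancel_of_le hBlt.le
  rcases le_or_gt (P B) (P S / 2) with h | h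
  · exact ⟨B, hBS, hBm, hB0, h⟩
  · refine ⟨S \ B, diff_subset, hS.diff hBm, hd0, ?_⟩
    by_contra hc
    push_neg at hc
    have : P S < P S := by
      calc P S = P B + P (S \ B) := hsum.symm
        _ > P S / 2 + P S / 2 := by exact ENNReal.add_lt_add h hc
        _ = P S := ENNReal.add_halves _
    exact lt_irrefl _ this

theorem my_small
    (hAtomless : ∀ A : Set Ω, MeasurableSet A → 0 < P A →
      ∃ B : Set Ω, B ⊆ A ∧ MeasurableSet B ∧ 0 < P B ∧ P B < P A)
    (S : Set Ω) (hS : MeasurableSet S) (h0 : 0 < P S) {ε : ℝ≥0∞} (hε : 0 < ε) :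
    ∃ T, T ⊆ S ∧ MeasurableSet T ∧ 0 < P T ∧ P T < ε := by
  obtain ⟨n, hn⟩ := ENNReal.exists_inv_two_pow_lt hε.ne'
  suffices h : ∃ T, T ⊆ S ∧ MeasurableSet T ∧ 0 < P T ∧ P T ≤ P S / 2 ^ n by
    obtain ⟨T, h1, h2, h3, h4⟩ := h
    refine ⟨T, h1, h2, h3, lt_of_le_of_lt h4 ?_⟩
    calc P S / 2 ^ n ≤ 1 / 2 ^ n := by
          gcongr
          exact prob_le_one
      _ = 2⁻¹ ^ n := by rw [one_div, ENNReal.inv_pow]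
      _ < ε := hn
  clear hn hε
  induction n with
  | zero => exact ⟨S, subset_rfl, hS, h0, by simp⟩
  | succ n ih =>
    obtain ⟨T, h1, h2, h3, h4⟩ := ih
    obtain ⟨T', h1', h2', h3', h4'⟩ := my_halflt P hAtomless T h2 h3
    refine ⟨T', h1'.trans h1, h2', h3', le_trans h4' ?_⟩
    calc P T / 2 ≤ (P S / 2 ^ n) / 2 := by gcongr
      _ = P S / 2 ^ (n+1) := by
          rw [pow_succ, div_eq_mul_inv, div_eq_mul_inv, div_eq_mul_inv,
            ENNReal.mul_inv (by simp) (by simp), mul_assoc]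

theorem my_sier
    (hAtomless : ∀ A : Set Ω, MeasurableSet A → 0 < P A →
      ∃ B : Set Ω, B ⊆ A ∧ MeasurableSet B ∧ 0 < P B ∧ P B < P A)
    (S : Set Ω) (hS : MeasurableSet S) {r : ℝ≥0∞} (hr : r ≤ P S) :
    ∃ T, T ⊆ S ∧ MeasurableSet T ∧ P T = r := by
  classical
  have hr1 : r ≤ 1 := hr.trans prob_le_one
  have hrtop : r ≠ ⊤ := (hr1.trans_lt (by norm_num)).ne
  -- the step existence
  have hstep : ∀ T : Set Ω, (MeasurableSet T ∧ T ⊆ S ∧ P T ≤ r) →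
      ∃ C, (C ⊆ S \ T ∧ MeasurableSet C ∧ P T + P C ≤ r) ∧
        ∀ D, D ⊆ S \ T → MeasurableSet D → P T + P D ≤ r → P D ≤ 2 * P C := by
    rintro T ⟨hTm, hTS, hTr⟩
    set δ : ℝ≥0∞ := ⨆ (D : {D : Set Ω // D ⊆ S \ T ∧ MeasurableSet D ∧ P T + P D ≤ r}), P D.1 with hδ
    rcases eq_or_lt_of_le (zero_le : (0:ℝ≥0∞) ≤ δ) with h0 | h0
    · refine ⟨∅, ⟨empty_subset _, MeasurableSet.empty, by simpa using hTr⟩, ?_⟩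
      intro D hD1 hD2 hD3
      have : P D ≤ δ := le_iSup (fun (D : {D : Set Ω // D ⊆ S \ T ∧ MeasurableSet D ∧ P T + P D ≤ r}) => P D.1) (⟨D, hD1, hD2, hD3⟩ : {D : Set Ω // D ⊆ S \ T ∧ MeasurableSet D ∧ P T + P D ≤ r})
      simp only [measure_empty, mul_zero]
      rw [← h0] at this
      simpa using this
    · have hδ1 : δ ≤ 1 := by
        apply iSup_le
        intro D
        exact prob_le_one
      have hhalf : δ / 2 < δ := ENNReal.half_lt_self h0.ne' (hδ1.trans_lt (by norm_num)).ne
      obtain ⟨D₀, hD₀⟩ := lt_iSup_iff.mp hhalf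
      refine ⟨D₀.1, ⟨D₀.2.1, D₀.2.2.1, D₀.2.2.2⟩, ?_⟩
      intro D hD1 hD2 hD3
      have h1 : P D ≤ δ := le_iSup (fun (D : {D : Set Ω // D ⊆ S \ T ∧ MeasurableSet D ∧ P T + P D ≤ r}) => P D.1) (⟨D, hD1, hD2, hD3⟩ : {D : Set Ω // D ⊆ S \ T ∧ MeasurableSet D ∧ P T + P D ≤ r})
      calc P D ≤ δ := h1
        _ = 2 * (δ / 2) := by rw [ENNReal.mul_div_cancel' (by norm_num) (by norm_num)]
        _ ≤ 2 * P D₀.1 := by gcongr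
  choose f hf1 hf2 using hstep
  -- the recursive sequence
  have hemp : MeasurableSet (∅ : Set Ω) ∧ (∅ : Set Ω) ⊆ S ∧ P ∅ ≤ r := ⟨MeasurableSet.empty, empty_subset _, by simp⟩
  let g : ℕ → {T : Set Ω // MeasurableSet T ∧ T ⊆ S ∧ P T ≤ r} := fun n =>
    Nat.rec ⟨∅, hemp⟩ (fun _ p => ⟨p.1 ∪ f p.1 p.2,
      p.2.1.union (hf1 p.1 p.2).2.1,
      union_subset p.2.2.1 ((hf1 p.1 p.2).1.trans diff_subset),
      le_trans (measure_union_le _ _) (hf1 p.1 p.2).2.2⟩) n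
  have hgsucc : ∀ n, (g (n+1)).1 = (g n).1 ∪ f (g n).1 (g n).2 := fun n => rfl
  have hgmono : Monotone (fun n => (g n).1) := by
    apply monotone_nat_of_le_succ
    intro n
    rw [hgsucc]
    exact subset_union_left
  set B : Set Ω := ⋃ n, (g n).1 with hB
  have hBm : MeasurableSet B := MeasurableSet.iUnion (fun n => (g n).2.1)
  have hBS : B ⊆ S := iUnion_subset (fun n => (g n).2.2.1)
  have hPB : P B ≤ r := by
    rw [hB, hgmono.directed_le.measure_iUnion]
    exact iSup_le (fun n => (g n).2.2.2)
  rcases eq_or_lt_of_le hPB with heq | hlt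
  · exact ⟨B, hBS, hBm, heq⟩
  exfalso
  -- P B < r : derive contradiction
  have hPBtop : P B ≠ ⊤ := (measure_lt_top P B).ne
  have hε : 0 < r - P B := tsub_pos_of_lt hlt
  have hdm : P (S \ B) = P S - P B := measure_diff hBS hBm.nullMeasurableSet hPBtop
  have hd0 : 0 < P (S \ B) := by
    rw [hdm]
    exact lt_of_lt_of_le hε (tsub_le_tsub_right hr _)
  obtain ⟨D, hD1, hD2, hD3, hD4⟩ := my_small P hAtomless (S \ B) (hS.diff hBm) hd0 hε
  -- D is admissible at each stage
  have hadm : ∀ n, D ⊆ S \ (g n).1 ∧ P (g n).1 + P D ≤ r := by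
    intro n
    have hsub : (g n).1 ⊆ B := subset_iUnion (fun n => (g n).1) n
    constructor
    · exact hD1.trans (diff_subset_diff_right hsub)
    · calc P (g n).1 + P D ≤ P B + P D := by gcongr
        _ ≤ P B + (r - P B) := by gcongr
        _ = r := add_tsub_cancel_of_le hlt.le
  -- each step set has measure ≥ P D / 2
  have hCbig : ∀ n, P D / 2 ≤ P (f (g n).1 (g n).2) := by
    intro n
    have := hf2 (g n).1 (g n).2 D (hadm n).1 hD2 (hadm n).2
    rw [ENNReal.div_le_iff_le_mul (Or.inl (by norm_num)) (Or.inl (by norm_num))]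
    rw [mul_comm] at this
    exact this
  -- the step sets are pairwise disjoint
  set C : ℕ → Set Ω := fun n => f (g n).1 (g n).2 with hC
  have hCsubB : ∀ n, C n ⊆ B := by
    intro n
    have : C n ⊆ (g (n+1)).1 := by rw [hgsucc]; exact subset_union_right
    exact this.trans (subset_iUnion (fun n => (g n).1) (n+1))
  have hCdisjg : ∀ n, Disjoint (C n) (g n).1 := by
    intro n
    have := (hf1 (g n).1 (g n).2).1
    exact disjoint_sdiff_left.mono_left this
  have hCdisj : Pairwise (Function.onFun Disjoint C) := by
    intro m n hmn
    rcases hmn.lt_or_gt with h | h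
    · have h1 : C m ⊆ (g n).1 := by
        have : C m ⊆ (g (m+1)).1 := by rw [hgsucc]; exact subset_union_right
        exact this.trans (hgmono h)
      exact ((hCdisjg n).mono_right h1).symm
    · have h1 : C n ⊆ (g m).1 := by
        have : C n ⊆ (g (n+1)).1 := by rw [hgsucc]; exact subset_union_right
        exact this.trans (hgmono h)
      exact (hCdisjg m).mono_right h1
  have hsum : ∑' n, P (C n) = P (⋃ n, C n) := (measure_iUnion hCdisj (fun n => (hf1 (g n).1 (g n).2).2.1)).symm
  have hle1 : ∑' n, P (C n) ≤ 1 := by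
    rw [hsum]
    exact prob_le_one
  have htop : (⊤ : ℝ≥0∞) ≤ ∑' n, P (C n) := by
    calc (⊤ : ℝ≥0∞) = ∑' _ : ℕ, P D / 2 := (ENNReal.tsum_const_eq_top_of_ne_zero (by
        simp only [ne_eq, ENNReal.div_eq_zero_iff]
        push_neg
        exact ⟨hD3.ne', by norm_num⟩)).symm
      _ ≤ ∑' n, P (C n) := ENNReal.tsum_le_tsum hCbig
  exact absurd (htop.trans hle1) (by norm_num)

theorem my_sier' (hA : AtomlessHyp P) (S : Set Ω) (hS : MeasurableSet S) {r : ℝ≥0∞} (hr : r ≤ P S) :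
    ∃ T, T ⊆ S ∧ MeasurableSet T ∧ P T = r := my_sier P hA S hS hr

open Classical in
noncomputable def myHalf (hA : AtomlessHyp P) (S : Set Ω) : Set Ω :=
  if h : MeasurableSet S then (my_sier' P hA S h (ENNReal.half_le_self)).choose else ∅

variable (hA : AtomlessHyp P)

lemma myHalf_subset (S : Set Ω) : myHalf P hA S ⊆ S := by
  unfold myHalf
  split
  · exact (my_sier' P hA S ‹_› ENNReal.half_le_self).choose_spec.1
  · exact empty_subset _

lemma myHalf_meas {S : Set Ω} (hS : MeasurableSet S) : MeasurableSet (myHalf P hA S) := by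
  unfold myHalf
  rw [dif_pos hS]
  exact (my_sier' P hA S hS ENNReal.half_le_self).choose_spec.2.1

lemma myHalf_measure {S : Set Ω} (hS : MeasurableSet S) : P (myHalf P hA S) = P S / 2 := by
  unfold myHalf
  rw [dif_pos hS]
  exact (my_sier' P hA S hS ENNReal.half_le_self).choose_spec.2.2

noncomputable def myH (hA : AtomlessHyp P) : Bool → Set Ω → Set Ω
  | false, S => myHalf P hA S
  | true, S => S \ myHalf P hA S

lemma myH_subset (b : Bool) (S : Set Ω) : myH P hA b S ⊆ S := by
  cases b
  · exact myHalf_subset P hA S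
  · exact diff_subset

lemma myH_meas (b : Bool) {S : Set Ω} (hS : MeasurableSet S) : MeasurableSet (myH P hA b S) := by
  cases b
  · exact myHalf_meas P hA hS
  · exact hS.diff (myHalf_meas P hA hS)

lemma myH_measure (b : Bool) {S : Set Ω} (hS : MeasurableSet S) : P (myH P hA b S) = P S / 2 := by
  cases b
  · exact myHalf_measure P hA hS
  · show P (S \ myHalf P hA S) = P S / 2
    rw [measure_diff (myHalf_subset P hA S) (myHalf_meas P hA hS).nullMeasurableSet
      (measure_lt_top P _).ne, myHalf_measure P hA hS, ENNReal.sub_half (measure_lt_top P S).ne]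

lemma myH_union (S : Set Ω) : myH P hA false S ∪ myH P hA true S = S :=
  union_diff_cancel (myHalf_subset P hA S)

lemma myH_disj (S : Set Ω) : Disjoint (myH P hA false S) (myH P hA true S) :=
  disjoint_sdiff_right

noncomputable def myT (hA : AtomlessHyp P) : ℕ → ℕ → ℕ → Set Ω
  | 0, i, j => if i = 0 ∧ j = 0 then univ else ∅
  | (n+1), i, j => myH P hA (decide (i % 2 = 1)) (myH P hA (decide (j % 2 = 1)) (myT hA n (i/2) (j/2)))

lemma myT_meas : ∀ n i j, MeasurableSet (myT P hA n i j) := by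
  intro n
  induction n with
  | zero => intro i j; unfold myT; split <;> simp
  | succ n ih =>
    intro i j
    exact myH_meas P hA _ (myH_meas P hA _ (ih _ _))

lemma myT_measure : ∀ n i j, i < 2^n → j < 2^n → P (myT P hA n i j) = ((4:ℝ≥0∞) ^ n)⁻¹ := by
  intro n
  induction n with
  | zero => intro i j hi hj
            interval_cases i
            interval_cases j
            simp [myT]
  | succ n ih =>
    intro i j hi hj
    have h1 : i / 2 < 2 ^ n := by omega
    have h2 : j / 2 < 2 ^ n := by omega
    show P (myH P hA (decide (i % 2 = 1)) (myH P hA (decide (j % 2 = 1)) (myT P hA n (i/2) (j/2)))) = _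
    rw [myH_measure P hA _ (myH_meas P hA _ (myT_meas P hA _ _ _)),
      myH_measure P hA _ (myT_meas P hA _ _ _), ih _ _ h1 h2]
    rw [pow_succ, ENNReal.mul_inv (by simp) (by simp)]
    rw [ENNReal.div_eq_inv_mul, ENNReal.div_eq_inv_mul]
    rw [show ((4:ℝ≥0∞))⁻¹ = (2:ℝ≥0∞)⁻¹ * (2:ℝ≥0∞)⁻¹ by
      rw [← ENNReal.mul_inv (by simp) (by simp)]; norm_num]
    ring

lemma myT_child_subset (n i j : ℕ) : myT P hA (n+1) i j ⊆ myT P hA n (i/2) (j/2) :=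
  (myH_subset P hA _ _).trans (myH_subset P hA _ _)

lemma myT_disj : ∀ n i j i' j', (i ≠ i' ∨ j ≠ j') → Disjoint (myT P hA n i j) (myT P hA n i' j') := by
  intro n
  induction n with
  | zero =>
    intro i j i' j' hne
    by_cases h : i = 0 ∧ j = 0
    · have h' : ¬ (i' = 0 ∧ j' = 0) := by omega
      show Disjoint _ (if i' = 0 ∧ j' = 0 then univ else (∅ : Set Ω))
      rw [if_neg h']
      simp
    · show Disjoint (if i = 0 ∧ j = 0 then univ else (∅ : Set Ω)) _
      rw [if_neg h]
      simp
  | succ n ih =>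
    intro i j i' j' hne
    show Disjoint (myH P hA (decide (i % 2 = 1)) (myH P hA (decide (j % 2 = 1)) (myT P hA n (i/2) (j/2))))
      (myH P hA (decide (i' % 2 = 1)) (myH P hA (decide (j' % 2 = 1)) (myT P hA n (i'/2) (j'/2))))
    by_cases h : i / 2 = i' / 2 ∧ j / 2 = j' / 2
    · obtain ⟨h1, h2⟩ := h
      rw [h1, h2]
      by_cases hj : j % 2 = j' % 2
      · have hi : i % 2 ≠ i' % 2 := by omega
        rw [hj]
        set S := myH P hA (decide (j' % 2 = 1)) (myT P hA n (i'/2) (j'/2))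
        have hd : decide (i % 2 = 1) ≠ decide (i' % 2 = 1) := by
          simp only [ne_eq, decide_eq_decide]
          omega
        rcases Bool.eq_false_or_eq_true (decide (i % 2 = 1)) with hb | hb <;>
          rcases Bool.eq_false_or_eq_true (decide (i' % 2 = 1)) with hb' | hb' <;>
          rw [hb, hb']
        · exact absurd (hb.trans hb'.symm) hd
        · exact (myH_disj P hA S).symm
        · exact myH_disj P hA S
        · exact absurd (hb.trans hb'.symm) hd
      · have hd : decide (j % 2 = 1) ≠ decide (j' % 2 = 1) := by
          simp only [ne_eq, decide_eq_decide]
          omega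
        have hdisj : Disjoint (myH P hA (decide (j % 2 = 1)) (myT P hA n (i'/2) (j'/2)))
            (myH P hA (decide (j' % 2 = 1)) (myT P hA n (i'/2) (j'/2))) := by
          set S := myT P hA n (i'/2) (j'/2)
          rcases Bool.eq_false_or_eq_true (decide (j % 2 = 1)) with hb | hb <;>
            rcases Bool.eq_false_or_eq_true (decide (j' % 2 = 1)) with hb' | hb' <;>
            rw [hb, hb']
          · exact absurd (hb.trans hb'.symm) hd
          · exact (myH_disj P hA S).symm
          · exact myH_disj P hA S
          · exact absurd (hb.trans hb'.symm) hd
        exact hdisj.mono (myH_subset P hA _ _) (myH_subset P hA _ _)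
    · have hpar : i / 2 ≠ i' / 2 ∨ j / 2 ≠ j' / 2 := by omega
      exact (ih _ _ _ _ hpar).mono (myT_child_subset P hA n i j) (myT_child_subset P hA n i' j')

lemma myT_split (n i j : ℕ) :
    myT P hA n i j = (myT P hA (n+1) (2*i) (2*j) ∪ myT P hA (n+1) (2*i+1) (2*j)) ∪
      (myT P hA (n+1) (2*i) (2*j+1) ∪ myT P hA (n+1) (2*i+1) (2*j+1)) := by
  have d1 : (2*i) / 2 = i := by omega
  have d2 : (2*i+1) / 2 = i := by omega
  have d3 : (2*j) / 2 = j := by omega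
  have d4 : (2*j+1) / 2 = j := by omega
  have m1 : decide ((2*i) % 2 = 1) = false := by simp only [decide_eq_false_iff_not]; omega
  have m2 : decide ((2*i+1) % 2 = 1) = true := by simp only [decide_eq_true_eq]; omega
  have m3 : decide ((2*j) % 2 = 1) = false := by simp only [decide_eq_false_iff_not]; omega
  have m4 : decide ((2*j+1) % 2 = 1) = true := by simp only [decide_eq_true_eq]; omega
  show myT P hA n i j =
    (myH P hA (decide ((2*i) % 2 = 1)) (myH P hA (decide ((2*j) % 2 = 1)) (myT P hA n ((2*i)/2) ((2*j)/2))) ∪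
     myH P hA (decide ((2*i+1) % 2 = 1)) (myH P hA (decide ((2*j) % 2 = 1)) (myT P hA n ((2*i+1)/2) ((2*j)/2)))) ∪
    (myH P hA (decide ((2*i) % 2 = 1)) (myH P hA (decide ((2*j+1) % 2 = 1)) (myT P hA n ((2*i)/2) ((2*j+1)/2))) ∪
     myH P hA (decide ((2*i+1) % 2 = 1)) (myH P hA (decide ((2*j+1) % 2 = 1)) (myT P hA n ((2*i+1)/2) ((2*j+1)/2))))
  rw [d1, d2, d3, d4, m1, m2, m3, m4, myH_union, myH_union, myH_union]
noncomputable def myQ (hA : AtomlessHyp P) (n k l : ℕ) : Set Ω :=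
  ⋃ (i : ℕ) (_ : i < k) (j : ℕ) (_ : j < l), myT P hA n i j

lemma myQ_mem {n k l : ℕ} {x : Ω} : x ∈ myQ P hA n k l ↔ ∃ i, i < k ∧ ∃ j, j < l ∧ x ∈ myT P hA n i j := by
  simp [myQ, mem_iUnion]

lemma myQ_meas (n k l : ℕ) : MeasurableSet (myQ P hA n k l) := by
  apply MeasurableSet.iUnion; intro i
  apply MeasurableSet.iUnion; intro _
  apply MeasurableSet.iUnion; intro j
  apply MeasurableSet.iUnion; intro _
  exact myT_meas P hA n i j

lemma myQ_mono {n k l k' l' : ℕ} (hk : k ≤ k') (hl : l ≤ l') : myQ P hA n k l ⊆ myQ P hA n k' l' := by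
  intro x hx
  rw [myQ_mem] at hx ⊢
  obtain ⟨i, hi, j, hj, hx⟩ := hx
  exact ⟨i, hi.trans_le hk, j, hj.trans_le hl, hx⟩

lemma myQ_measure (n k l : ℕ) (hk : k ≤ 2^n) (hl : l ≤ 2^n) :
    P (myQ P hA n k l) = (k : ℝ≥0∞) * l / 4 ^ n := by
  have heq : myQ P hA n k l = ⋃ (p : Fin k × Fin l), myT P hA n p.1 p.2 := by
    ext x
    rw [myQ_mem]
    simp only [mem_iUnion]
    constructor
    · rintro ⟨i, hi, j, hj, hx⟩; exact ⟨(⟨i, hi⟩, ⟨j, hj⟩), hx⟩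
    · rintro ⟨⟨i, j⟩, hx⟩; exact ⟨i, i.2, j, j.2, hx⟩
  have hd : Pairwise (Function.onFun Disjoint (fun p : Fin k × Fin l => myT P hA n p.1 p.2)) := by
    intro p q hpq
    apply myT_disj
    by_contra hc
    push_neg at hc
    exact hpq (Prod.ext (Fin.ext hc.1) (Fin.ext hc.2))
  rw [heq, measure_iUnion hd (fun p => myT_meas P hA n p.1 p.2), tsum_fintype]
  have hval : ∀ p : Fin k × Fin l, P (myT P hA n p.1 p.2) = ((4:ℝ≥0∞) ^ n)⁻¹ := fun p =>
    myT_measure P hA n p.1 p.2 (p.1.2.trans_le hk) (p.2.2.trans_le hl)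
  rw [Finset.sum_congr rfl (fun p _ => hval p), Finset.sum_const, Finset.card_univ,
    Fintype.card_prod, Fintype.card_fin, Fintype.card_fin, nsmul_eq_mul, Nat.cast_mul,
    ENNReal.div_eq_inv_mul, mul_comm]

lemma myQ_step (n k l : ℕ) : myQ P hA n k l = myQ P hA (n+1) (2*k) (2*l) := by
  apply subset_antisymm
  · intro x hx
    rw [myQ_mem] at hx
    obtain ⟨i, hi, j, hj, hx⟩ := hx
    rw [myT_split P hA n i j] at hx
    rw [myQ_mem]
    simp only [mem_union] at hx
    rcases hx with (h | h) | (h | h)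
    · exact ⟨2*i, by omega, 2*j, by omega, h⟩
    · exact ⟨2*i+1, by omega, 2*j, by omega, h⟩
    · exact ⟨2*i, by omega, 2*j+1, by omega, h⟩
    · exact ⟨2*i+1, by omega, 2*j+1, by omega, h⟩
  · intro x hx
    rw [myQ_mem] at hx ⊢
    obtain ⟨i, hi, j, hj, hx⟩ := hx
    exact ⟨i/2, by omega, j/2, by omega, myT_child_subset P hA n i j hx⟩

lemma myQ_inter (n k l k' l' : ℕ) :
    myQ P hA n k l ∩ myQ P hA n k' l' = myQ P hA n (min k k') (min l l') := by
  apply subset_antisymm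
  · rintro x ⟨hx1, hx2⟩
    rw [myQ_mem] at hx1 hx2 ⊢
    obtain ⟨i, hi, j, hj, hx⟩ := hx1
    obtain ⟨i', hi', j', hj', hx'⟩ := hx2
    have hij : i = i' ∧ j = j' := by
      by_contra hc
      have := myT_disj P hA n i j i' j' (by omega)
      exact (this.ne_of_mem hx hx') rfl
    exact ⟨i, by omega, j, by omega, hx⟩
  · intro x hx
    exact ⟨myQ_mono P hA (min_le_left _ _) (min_le_left _ _) hx,
      myQ_mono P hA (min_le_right _ _) (min_le_right _ _) hx⟩

lemma myQ_univ : myQ P hA 0 1 1 = univ := by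
  ext x
  simp only [mem_univ, iff_true, myQ_mem]
  exact ⟨0, one_pos, 0, one_pos, by simp [myT]⟩
lemma myfloor_le {t : ℝ} (ht : t ≤ 1) (n : ℕ) : ⌊t * 2^n⌋₊ ≤ 2^n := by
  have h : t * 2^n ≤ ((2^n : ℕ) : ℝ) := by
    push_cast
    nlinarith [pow_pos (two_pos (α := ℝ)) n]
  calc ⌊t * 2^n⌋₊ ≤ ⌊((2^n : ℕ) : ℝ)⌋₊ := Nat.floor_mono h
    _ = 2^n := Nat.floor_natCast _

lemma myfloor_step {t : ℝ} (ht : 0 ≤ t) (n : ℕ) : 2 * ⌊t * 2^n⌋₊ ≤ ⌊t * 2^(n+1)⌋₊ := by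
  apply Nat.le_floor
  push_cast
  have h1 : (⌊t * 2^n⌋₊ : ℝ) ≤ t * 2^n := Nat.floor_le (by positivity)
  rw [pow_succ]
  nlinarith

lemma myQ_mono_seq {f g : ℕ → ℕ} (hf : ∀ n, 2 * f n ≤ f (n+1)) (hg : ∀ n, 2 * g n ≤ g (n+1)) :
    Monotone (fun n => myQ P hA n (f n) (g n)) := by
  apply monotone_nat_of_le_succ
  intro n
  calc myQ P hA n (f n) (g n) = myQ P hA (n+1) (2 * f n) (2 * g n) := myQ_step P hA n _ _
    _ ⊆ myQ P hA (n+1) (f (n+1)) (g (n+1)) := myQ_mono P hA (hf n) (hg n)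

noncomputable def myA (hA : AtomlessHyp P) (t : ℝ) : Set Ω := ⋃ n, myQ P hA n ⌊t * 2^n⌋₊ (2^n)
noncomputable def myB (hA : AtomlessHyp P) (t : ℝ) : Set Ω := ⋃ n, myQ P hA n (2^n) ⌊t * 2^n⌋₊

lemma floor_div_tendsto {a : ℝ} (ha : 0 ≤ a) :
    Tendsto (fun n : ℕ => (⌊a * 2^n⌋₊ : ℝ) / 2^n) atTop (𝓝 a) := by
  have h2 : Tendsto (fun n : ℕ => (2:ℝ)^n) atTop atTop :=
    tendsto_pow_atTop_atTop_of_one_lt one_lt_two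
  exact (tendsto_nat_floor_mul_div_atTop ha).comp h2

lemma cast_helper (k l n : ℕ) :
    (k : ℝ≥0∞) * l / 4 ^ n = ENNReal.ofReal ((k:ℝ)/2^n * ((l:ℝ)/2^n)) := by
  have h : (k:ℝ)/2^n * ((l:ℝ)/2^n) = (k:ℝ) * l / 4^n := by
    rw [div_mul_div_comm, ← mul_pow]
    norm_num
  rw [h, ENNReal.ofReal_div_of_pos (by positivity), ENNReal.ofReal_mul (by positivity),
    ENNReal.ofReal_natCast, ENNReal.ofReal_natCast, ENNReal.ofReal_pow (by norm_num)]
  norm_num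

lemma my_joint {s t : ℝ} (hs : s ∈ Icc (0:ℝ) 1) (ht : t ∈ Icc (0:ℝ) 1) :
    P (myA P hA s ∩ myB P hA t) = ENNReal.ofReal s * ENNReal.ofReal t := by
  obtain ⟨hs0, hs1⟩ := hs
  obtain ⟨ht0, ht1⟩ := ht
  have hpow : ∀ n:ℕ, 2 * 2^n ≤ 2^(n+1) := fun n => by omega
  have hmA : Monotone (fun n => myQ P hA n ⌊s*2^n⌋₊ (2^n)) :=
    myQ_mono_seq P hA (myfloor_step hs0) hpow
  have hmB : Monotone (fun n => myQ P hA n (2^n) ⌊t*2^n⌋₊) :=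
    myQ_mono_seq P hA hpow (myfloor_step ht0)
  have hmAB : Monotone (fun n => myQ P hA n ⌊s*2^n⌋₊ ⌊t*2^n⌋₊) :=
    myQ_mono_seq P hA (myfloor_step hs0) (myfloor_step ht0)
  have h1 : myA P hA s ∩ myB P hA t = ⋃ n, myQ P hA n ⌊s*2^n⌋₊ ⌊t*2^n⌋₊ := by
    rw [myA, myB, ← iUnion_inter_of_monotone hmA hmB]
    apply iUnion_congr
    intro n
    rw [myQ_inter, min_eq_left (myfloor_le hs1 n), min_eq_right (myfloor_le ht1 n)]
  rw [h1, hmAB.directed_le.measure_iUnion]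
  have hterm : ∀ n, P (myQ P hA n ⌊s*2^n⌋₊ ⌊t*2^n⌋₊) =
      ENNReal.ofReal ((⌊s*2^n⌋₊ : ℝ)/2^n * ((⌊t*2^n⌋₊:ℝ)/2^n)) := by
    intro n
    rw [myQ_measure P hA n _ _ (myfloor_le hs1 n) (myfloor_le ht1 n), cast_helper]
  have hlim : Tendsto (fun n => P (myQ P hA n ⌊s*2^n⌋₊ ⌊t*2^n⌋₊)) atTop
      (𝓝 (ENNReal.ofReal (s * t))) := by
    simp only [hterm]
    have : Tendsto (fun n : ℕ => (⌊s*2^n⌋₊ : ℝ)/2^n * ((⌊t*2^n⌋₊:ℝ)/2^n)) atTop (𝓝 (s * t)) :=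
      (floor_div_tendsto hs0).mul (floor_div_tendsto ht0)
    exact (ENNReal.continuous_ofReal.tendsto _).comp this
  have hmono : Monotone (fun n => P (myQ P hA n ⌊s*2^n⌋₊ ⌊t*2^n⌋₊)) :=
    fun n m hnm => measure_mono (hmAB hnm)
  have h2 := tendsto_atTop_iSup hmono
  rw [tendsto_nhds_unique h2 hlim, ENNReal.ofReal_mul hs0]

lemma myA_one : myA P hA 1 = univ := by
  apply eq_univ_of_univ_subset
  have h0 : myQ P hA 0 ⌊(1:ℝ) * 2^0⌋₊ (2^0) = univ := by
    norm_num
    exact myQ_univ P hA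
  rw [← h0]
  exact subset_iUnion (fun n => myQ P hA n ⌊(1:ℝ) * 2^n⌋₊ (2^n)) 0

lemma myB_one : myB P hA 1 = univ := by
  apply eq_univ_of_univ_subset
  have h0 : myQ P hA 0 (2^0) ⌊(1:ℝ) * 2^0⌋₊ = univ := by
    norm_num
    exact myQ_univ P hA
  rw [← h0]
  exact subset_iUnion (fun n => myQ P hA n (2^n) ⌊(1:ℝ) * 2^n⌋₊) 0

lemma myA_mono : Monotone (myA P hA) := by
  intro s t hst
  apply iUnion_mono
  intro n
  exact myQ_mono P hA (Nat.floor_mono (by nlinarith [pow_pos (two_pos (α := ℝ)) n])) le_rfl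

lemma myB_mono : Monotone (myB P hA) := by
  intro s t hst
  apply iUnion_mono
  intro n
  exact myQ_mono P hA le_rfl (Nat.floor_mono (by nlinarith [pow_pos (two_pos (α := ℝ)) n]))

lemma myA_meas (t : ℝ) : MeasurableSet (myA P hA t) :=
  MeasurableSet.iUnion (fun n => myQ_meas P hA n _ _)

lemma myB_meas (t : ℝ) : MeasurableSet (myB P hA t) :=
  MeasurableSet.iUnion (fun n => myQ_meas P hA n _ _)

lemma myA_measure {t : ℝ} (ht : t ∈ Icc (0:ℝ) 1) : P (myA P hA t) = ENNReal.ofReal t := by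
  have := my_joint P hA ht (by norm_num : (1:ℝ) ∈ Icc (0:ℝ) 1)
  rw [myB_one, inter_univ] at this
  rw [this, ENNReal.ofReal_one, mul_one]

lemma myB_measure {t : ℝ} (ht : t ∈ Icc (0:ℝ) 1) : P (myB P hA t) = ENNReal.ofReal t := by
  have := my_joint P hA (by norm_num : (1:ℝ) ∈ Icc (0:ℝ) 1) ht
  rw [myA_one, univ_inter] at this
  rw [this, ENNReal.ofReal_one, one_mul]
end

theorem stmt_17 {Ω : Type} [MeasurableSpace Ω] (P : Measure Ω) [IsProbabilityMeasure P]
    (hAtomless : ∀ A : Set Ω, MeasurableSet A → 0 < P A →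
      ∃ B : Set Ω, B ⊆ A ∧ MeasurableSet B ∧ 0 < P B ∧ P B < P A) :
    ∃ A B : ℝ → Set Ω,
      (∀ t ∈ Set.Icc (0 : ℝ) 1, MeasurableSet (A t) ∧ MeasurableSet (B t)) ∧
      (∀ s t : ℝ, s ∈ Set.Icc (0 : ℝ) 1 → t ∈ Set.Icc (0 : ℝ) 1 → s ≤ t →
        A s ⊆ A t ∧ B s ⊆ B t) ∧
      (∀ t ∈ Set.Icc (0 : ℝ) 1, P (A t) = ENNReal.ofReal t ∧ P (B t) = ENNReal.ofReal t) ∧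
      ProbabilityTheory.Indep
        (MeasurableSpace.generateFrom {s : Set Ω | ∃ t ∈ Set.Icc (0 : ℝ) 1, s = A t})
        (MeasurableSpace.generateFrom {s : Set Ω | ∃ t ∈ Set.Icc (0 : ℝ) 1, s = B t}) P := by
  have hA : AtomlessHyp P := hAtomless
  refine ⟨myA P hA, myB P hA, ?_, ?_, ?_, ?_⟩
  · exact fun t _ => ⟨myA_meas P hA t, myB_meas P hA t⟩
  · exact fun s t _ _ hst => ⟨myA_mono P hA hst, myB_mono P hA hst⟩
  · exact fun t ht => ⟨myA_measure P hA ht, myB_measure P hA ht⟩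
  · apply ProbabilityTheory.IndepSets.indep'
    · rintro s ⟨t, ht, rfl⟩
      exact myA_meas P hA t
    · rintro s ⟨t, ht, rfl⟩
      exact myB_meas P hA t
    · rintro u ⟨t1, ht1, rfl⟩ v ⟨t2, ht2, rfl⟩ _
      refine ⟨min t1 t2, ⟨le_min ht1.1 ht2.1, (min_le_left _ _).trans ht1.2⟩, ?_⟩
      rcases le_total t1 t2 with h | h
      · rw [min_eq_left h, inter_eq_self_of_subset_left (myA_mono P hA h)]
      · rw [min_eq_right h, inter_eq_self_of_subset_right (myA_mono P hA h)]
    · rintro u ⟨t1, ht1, rfl⟩ v ⟨t2, ht2, rfl⟩ _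
      refine ⟨min t1 t2, ⟨le_min ht1.1 ht2.1, (min_le_left _ _).trans ht1.2⟩, ?_⟩
      rcases le_total t1 t2 with h | h
      · rw [min_eq_left h, inter_eq_self_of_subset_left (myB_mono P hA h)]
      · rw [min_eq_right h, inter_eq_self_of_subset_right (myB_mono P hA h)]
    · rw [ProbabilityTheory.IndepSets_iff _ _ _]
      rintro u v ⟨t1, ht1, rfl⟩ ⟨t2, ht2, rfl⟩
      rw [my_joint P hA ht1 ht2, myA_measure P hA ht1, myB_measure P hA ht2]
end
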